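/- arXiv:1807.02650 — 8 statements merged into one kernel-verified Lean document; each statement's English description precedes it below -/
import Mathlib

section
/- Let C be a category equipped with a class of cofibrations and a class of fibrations. If j : U → V and i : V → W are cofibrations such that both i and the composite i ∘ j are acyclic cofibrations, then j is an acyclic cofibration. -/
open CategoryTheory CategoryTheory.Limits

universe w v u

namespace WMC

variable {C : Type u} [Category.{v} C]

/-- An object is cofibrant when the map from the initial object is a cofibration. -/
def Cofibrant [HasInitial C] (Cof : MorphismProperty C) (X : C) : Prop :=
  Cof (initial.to X)

/-- An object is fibrant when the map to the terminal object is a fibration. -/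
def Fibrant [HasTerminal C] (Fib : MorphismProperty C) (X : C) : Prop :=
  Fib (terminal.from X)

/-- The axioms for a class of cofibrations. -/
structure IsCofClass [HasInitial C] (Cof : MorphismProperty C) : Prop where
  initial_cofibrant : Cofibrant Cof (⊥_ C)
  iso_mem : ∀ {X Y : C} (f : X ⟶ Y), IsIso f → Cofibrant Cof X → Cof f
  comp_mem : ∀ {X Y Z : C} (f : X ⟶ Y) (g : Y ⟶ Z), Cof f → Cof g → Cof (f ≫ g)
  pushout_mem : ∀ {A B X : C} (i : A ⟶ B) (f : A ⟶ X), Cof i → Cofibrant Cof A →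
    Cofibrant Cof X →
    ∃ (P : C) (inl : X ⟶ P) (inr : B ⟶ P), IsPushout f i inl inr ∧ Cof inl

/-- The axioms for a class of fibrations (a class of cofibrations on `Cᵒᵖ`). -/
structure IsFibClass [HasTerminal C] (Fib : MorphismProperty C) : Prop where
  terminal_fibrant : Fibrant Fib (⊤_ C)
  iso_mem : ∀ {X Y : C} (f : X ⟶ Y), IsIso f → Fibrant Fib Y → Fib f
  comp_mem : ∀ {X Y Z : C} (f : X ⟶ Y) (g : Y ⟶ Z), Fib f → Fib g → Fib (f ≫ g)
  pullback_mem : ∀ {A B X : C} (p : B ⟶ A) (f : X ⟶ A), Fib p → Fibrant Fib A →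
    Fibrant Fib X →
    ∃ (P : C) (fst : P ⟶ X) (snd : P ⟶ B), IsPullback fst snd f p ∧ Fib fst

variable [HasInitial C] [HasTerminal C]

/-- Acyclic fibration: a fibration with the right lifting property against all
cofibrations between cofibrant objects. -/
def IsAcyclicFib (Cof Fib : MorphismProperty C) {X Y : C} (p : X ⟶ Y) : Prop :=
  Fib p ∧ ∀ {A B : C} (i : A ⟶ B), Cof i → Cofibrant Cof A → Cofibrant Cof B →
    HasLiftingProperty i p

/-- Acyclic cofibration: a cofibration with the left lifting property against all
fibrations between fibrant objects. -/
def IsAcyclicCof (Cof Fib : MorphismProperty C) {A B : C} (i : A ⟶ B) : Prop :=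
  Cof i ∧ ∀ {X Y : C} (p : X ⟶ Y), Fib p → Fibrant Fib X → Fibrant Fib Y →
    HasLiftingProperty i p

/-- If `j` and `i` are cofibrations such that `i` and `i ∘ j` are acyclic
cofibrations, then `j` is an acyclic cofibration. -/
theorem statement0 (Cof Fib : MorphismProperty C)
    (hCof : IsCofClass Cof) (hFib : IsFibClass Fib)
    {U V W : C} (j : U ⟶ V) (i : V ⟶ W) (hj : Cof j)
    (hi : IsAcyclicCof Cof Fib i) (hji : IsAcyclicCof Cof Fib (j ≫ i)) :
    IsAcyclicCof Cof Fib j := by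
  refine ⟨hj, fun {X Y} p hp hX hY => ?_⟩
  have h1 : HasLiftingProperty i (terminal.from Y) :=
    hi.2 _ hY hY hFib.terminal_fibrant
  have h2 : HasLiftingProperty (j ≫ i) p := hji.2 p hp hX hY
  constructor
  intro u v sq
  have sq1 : CommSq v i (terminal.from Y) (terminal.from W) := ⟨by simp⟩
  have sq2 : CommSq u (j ≫ i) p sq1.lift :=
    ⟨by rw [Category.assoc, sq1.fac_left, sq.w]⟩
  exact ⟨⟨⟨i ≫ sq2.lift, by rw [← Category.assoc, sq2.fac_left],
    by rw [Category.assoc, sq2.fac_right, sq1.fac_left]⟩⟩⟩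

end WMC
end

section
/- Let C be a category equipped with a class of cofibrations and a class of fibrations, let X be a cofibrant object and Y a fibrant object such that the coproduct X ⊔ X and the product Y × Y exist, and let f, g : X → Y be two morphisms. If X admits a relative weak cylinder object IX (for 0 → X) and Y admits a relative weak path object PY (for Y → 1), then f and g are homotopic relative to IX if and only if they are homotopic relative to PY. -/
open CategoryTheory CategoryTheory.Limits

universe w v u

namespace WMC

variable {C : Type u} [Category.{v} C]

variable [HasInitial C] [HasTerminal C]

/-- A (relative) weak cylinder object for the cofibration `0 ⟶ X`, i.e. a weak cylinder
object for a cofibrant object `X`.  It includes the data of the coproduct `X ⊔ X`. -/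
structure WeakCylinder (Cof Fib : MorphismProperty C) (X : C) where
  XX : C
  in₀ : X ⟶ XX
  in₁ : X ⟶ XX
  isCoprod : IsColimit (BinaryCofan.mk in₀ in₁)
  Cyl : C
  D : C
  ι : XX ⟶ Cyl
  ρ : Cyl ⟶ D
  e : X ⟶ D
  ι_cof : Cof ι
  in₀_ι_acyclic : IsAcyclicCof Cof Fib (in₀ ≫ ι)
  e_acyclic : IsAcyclicCof Cof Fib e
  fac₀ : in₀ ≫ ι ≫ ρ = e
  fac₁ : in₁ ≫ ι ≫ ρ = e

/-- A (relative) weak path object for the fibration `Y ⟶ 1`, i.e. a weak path object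
for a fibrant object `Y`.  It includes the data of the product `Y × Y`. -/
structure WeakPath (Cof Fib : MorphismProperty C) (Y : C) where
  YY : C
  pr₀ : YY ⟶ Y
  pr₁ : YY ⟶ Y
  isProd : IsLimit (BinaryFan.mk pr₀ pr₁)
  Pth : C
  T : C
  π : Pth ⟶ YY
  σ : T ⟶ Pth
  e : T ⟶ Y
  π_fib : Fib π
  π_pr₀_acyclic : IsAcyclicFib Cof Fib (π ≫ pr₀)
  e_acyclic : IsAcyclicFib Cof Fib e
  fac₀ : σ ≫ π ≫ pr₀ = e
  fac₁ : σ ≫ π ≫ pr₁ = e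

/-- `f` and `g` are homotopic relative to the weak cylinder object `W`:
the map `(f, g) : X ⊔ X ⟶ Y` factors through `ι : X ⊔ X ⟶ I X`. -/
def CylHomotopic {Cof Fib : MorphismProperty C} {X Y : C}
    (W : WeakCylinder Cof Fib X) (f g : X ⟶ Y) : Prop :=
  ∃ h : W.Cyl ⟶ Y, W.in₀ ≫ W.ι ≫ h = f ∧ W.in₁ ≫ W.ι ≫ h = g

/-- `f` and `g` are homotopic relative to the weak path object `P`:
the map `(f, g) : X ⟶ Y × Y` factors through `π : P Y ⟶ Y × Y`. -/
def PathHomotopic {Cof Fib : MorphismProperty C} {X Y : C}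
    (P : WeakPath Cof Fib Y) (f g : X ⟶ Y) : Prop :=
  ∃ h : X ⟶ P.Pth, h ≫ P.π ≫ P.pr₀ = f ∧ h ≫ P.π ≫ P.pr₁ = g

/-- The product of a fibrant object with itself is fibrant. -/
lemma fibrant_of_isProd (Fib : MorphismProperty C) (hFib : IsFibClass Fib)
    {Y YY : C} (hY : Fibrant Fib Y) (pr₀ pr₁ : YY ⟶ Y)
    (isProd : IsLimit (BinaryFan.mk pr₀ pr₁)) : Fibrant Fib YY := by
  obtain ⟨Pb, fst, snd, hPB, hfst⟩ :=
    hFib.pullback_mem (terminal.from Y) (terminal.from Y) hY hFib.terminal_fibrant hY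
  have hPfib : Fibrant Fib Pb := by
    have h : terminal.from Pb = fst ≫ terminal.from Y := terminal.hom_ext _ _
    rw [Fibrant, h]
    exact hFib.comp_mem _ _ hfst hY
  let ψ : YY ⟶ Pb := hPB.lift pr₀ pr₁ (terminal.hom_ext _ _)
  obtain ⟨φ, hφ₀, hφ₁⟩ : ∃ φ : Pb ⟶ YY, φ ≫ pr₀ = fst ∧ φ ≫ pr₁ = snd :=
    ⟨_, (BinaryFan.IsLimit.lift' isProd fst snd).2⟩
  have hψfst : ψ ≫ fst = pr₀ := hPB.lift_fst _ _ _
  have hψsnd : ψ ≫ snd = pr₁ := hPB.lift_snd _ _ _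
  have hψφ : ψ ≫ φ = 𝟙 YY := by
    refine BinaryFan.IsLimit.hom_ext isProd (?_ : (ψ ≫ φ) ≫ pr₀ = 𝟙 YY ≫ pr₀)
      (?_ : (ψ ≫ φ) ≫ pr₁ = 𝟙 YY ≫ pr₁) <;>
      simp only [BinaryFan.mk_fst, BinaryFan.mk_snd, Category.assoc, Category.id_comp,
        hφ₀, hφ₁, hψfst, hψsnd]
  have hφψ : φ ≫ ψ = 𝟙 Pb := by
    apply hPB.hom_ext <;>
      simp only [Category.assoc, Category.id_comp, hψfst, hψsnd, hφ₀, hφ₁]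
  have hiso : IsIso ψ := ⟨φ, hψφ, hφψ⟩
  have h : terminal.from YY = ψ ≫ terminal.from Pb := terminal.hom_ext _ _
  rw [Fibrant, h]
  exact hFib.comp_mem _ _ (hFib.iso_mem ψ hiso hPfib) hPfib

/-- The coproduct of a cofibrant object with itself is cofibrant. -/
lemma cofibrant_of_isCoprod (Cof : MorphismProperty C) (hCof : IsCofClass Cof)
    {X XX : C} (hX : Cofibrant Cof X) (in₀ in₁ : X ⟶ XX)
    (isCoprod : IsColimit (BinaryCofan.mk in₀ in₁)) : Cofibrant Cof XX := by
  obtain ⟨Po, inl, inr, hPO, hinl⟩ :=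
    hCof.pushout_mem (initial.to X) (initial.to X) hX hCof.initial_cofibrant hX
  have hPcof : Cofibrant Cof Po := by
    have h : initial.to Po = initial.to X ≫ inl := initial.hom_ext _ _
    rw [Cofibrant, h]
    exact hCof.comp_mem _ _ hX hinl
  let φ : Po ⟶ XX := hPO.desc in₀ in₁ (initial.hom_ext _ _)
  obtain ⟨ψ, hψ₀, hψ₁⟩ : ∃ ψ : XX ⟶ Po, in₀ ≫ ψ = inl ∧ in₁ ≫ ψ = inr :=
    ⟨_, (BinaryCofan.IsColimit.desc' isCoprod inl inr).2⟩
  have hinlφ : inl ≫ φ = in₀ := hPO.inl_desc _ _ _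
  have hinrφ : inr ≫ φ = in₁ := hPO.inr_desc _ _ _
  have hφψ : φ ≫ ψ = 𝟙 Po := by
    apply hPO.hom_ext <;>
      simp only [← Category.assoc, Category.comp_id, hinlφ, hinrφ, hψ₀, hψ₁]
  have hψφ : ψ ≫ φ = 𝟙 XX := by
    refine BinaryCofan.IsColimit.hom_ext isCoprod (?_ : in₀ ≫ ψ ≫ φ = in₀ ≫ 𝟙 XX)
      (?_ : in₁ ≫ ψ ≫ φ = in₁ ≫ 𝟙 XX) <;>
      simp only [BinaryCofan.mk_inl, BinaryCofan.mk_inr, ← Category.assoc,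
        Category.comp_id, hψ₀, hψ₁, hinlφ, hinrφ] <;> simp
  have hiso : IsIso φ := ⟨ψ, hφψ, hψφ⟩
  have h : initial.to XX = initial.to Po ≫ φ := initial.hom_ext _ _
  rw [Cofibrant, h]
  exact hCof.comp_mem _ _ hPcof (hCof.iso_mem φ hiso hPcof)

/-- homotopy relative to a weak cylinder object for `X` agrees with homotopy
relative to a weak path object for `Y`, for maps from a cofibrant `X` to a fibrant `Y`. -/
theorem statement1 (Cof Fib : MorphismProperty C)
    (hCof : IsCofClass Cof) (hFib : IsFibClass Fib)
    {X Y : C} (hX : Cofibrant Cof X) (hY : Fibrant Fib Y)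
    (W : WeakCylinder Cof Fib X) (P : WeakPath Cof Fib Y) (f g : X ⟶ Y) :
    CylHomotopic W f g ↔ PathHomotopic P f g := by
  constructor
  · rintro ⟨H, hH₀, hH₁⟩
    -- `Y × Y` and `P Y` are fibrant
    have hYY : Fibrant Fib P.YY := fibrant_of_isProd Fib hFib hY P.pr₀ P.pr₁ P.isProd
    have hPth : Fibrant Fib P.Pth := by
      have h : terminal.from P.Pth = P.π ≫ terminal.from P.YY := terminal.hom_ext _ _
      rw [Fibrant, h]
      exact hFib.comp_mem _ _ P.π_fib hYY
    -- a "constant path at f" parameter `l : X ⟶ T` with `l ≫ P.e = f`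
    haveI := P.e_acyclic.2 (initial.to X) hX hCof.initial_cofibrant hX
    have sq1 : CommSq (initial.to P.T) (initial.to X) P.e f := ⟨initial.hom_ext _ _⟩
    set l := sq1.lift with hl_def
    have hl : l ≫ P.e = f := sq1.fac_right
    -- a map `q : W.D ⟶ Y` with `W.e ≫ q = f`
    haveI := W.e_acyclic.2 (terminal.from Y) hY hY hFib.terminal_fibrant
    have sq2 : CommSq f W.e (terminal.from Y) (terminal.from W.D) := ⟨terminal.hom_ext _ _⟩
    set q := sq2.lift with hq_def
    have hq : W.e ≫ q = f := sq2.fac_left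
    -- the map `Cyl ⟶ Y × Y` given by `(ρ ≫ q, H)`
    obtain ⟨b, hb₀, hb₁⟩ : ∃ b : W.Cyl ⟶ P.YY, b ≫ P.pr₀ = W.ρ ≫ q ∧ b ≫ P.pr₁ = H :=
      ⟨_, (BinaryFan.IsLimit.lift' P.isProd (W.ρ ≫ q) H).2⟩
    -- the main lifting square
    haveI := W.in₀_ι_acyclic.2 P.π P.π_fib hPth hYY
    have sq3 : CommSq (l ≫ P.σ) (W.in₀ ≫ W.ι) P.π b := ⟨by
      refine BinaryFan.IsLimit.hom_ext P.isProd
        (?_ : ((l ≫ P.σ) ≫ P.π) ≫ P.pr₀ = ((W.in₀ ≫ W.ι) ≫ b) ≫ P.pr₀)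
        (?_ : ((l ≫ P.σ) ≫ P.π) ≫ P.pr₁ = ((W.in₀ ≫ W.ι) ≫ b) ≫ P.pr₁) <;>
        simp only [BinaryFan.mk_fst, BinaryFan.mk_snd, Category.assoc, hb₀, hb₁]
      · rw [P.fac₀, hl, reassoc_of% W.fac₀, hq]
      · rw [P.fac₁, hl, hH₀]⟩
    refine ⟨W.in₁ ≫ W.ι ≫ sq3.lift, ?_, ?_⟩
    · rw [Category.assoc, Category.assoc, reassoc_of% sq3.fac_right, hb₀,
        reassoc_of% W.fac₁, hq]
    · rw [Category.assoc, Category.assoc, reassoc_of% sq3.fac_right, hb₁, hH₁]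
  · rintro ⟨K, hK₀, hK₁⟩
    -- `X ⊔ X` and `I X` are cofibrant
    have hXX : Cofibrant Cof W.XX := cofibrant_of_isCoprod Cof hCof hX W.in₀ W.in₁ W.isCoprod
    have hCyl : Cofibrant Cof W.Cyl := by
      have h : initial.to W.Cyl = initial.to W.XX ≫ W.ι := initial.hom_ext _ _
      rw [Cofibrant, h]
      exact hCof.comp_mem _ _ hXX W.ι_cof
    -- a "constant path at f" parameter `q' : X ⟶ T` with `q' ≫ P.e = f`
    haveI := P.e_acyclic.2 (initial.to X) hX hCof.initial_cofibrant hX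
    have sq1 : CommSq (initial.to P.T) (initial.to X) P.e f := ⟨initial.hom_ext _ _⟩
    set q' := sq1.lift with hq'_def
    have hq' : q' ≫ P.e = f := sq1.fac_right
    -- a map `l' : W.D ⟶ Y` with `W.e ≫ l' = f`
    haveI := W.e_acyclic.2 (terminal.from Y) hY hY hFib.terminal_fibrant
    have sq2 : CommSq f W.e (terminal.from Y) (terminal.from W.D) := ⟨terminal.hom_ext _ _⟩
    set l' := sq2.lift with hl'_def
    have hl' : W.e ≫ l' = f := sq2.fac_left
    -- the map `X ⊔ X ⟶ P Y` given by `(q' ≫ σ, K)`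
    obtain ⟨t, ht₀, ht₁⟩ : ∃ t : W.XX ⟶ P.Pth, W.in₀ ≫ t = q' ≫ P.σ ∧ W.in₁ ≫ t = K :=
      ⟨_, (BinaryCofan.IsColimit.desc' W.isCoprod (q' ≫ P.σ) K).2⟩
    -- the main lifting square
    haveI := P.π_pr₀_acyclic.2 W.ι W.ι_cof hXX hCyl
    have sq3 : CommSq t W.ι (P.π ≫ P.pr₀) (W.ρ ≫ l') := ⟨by
      refine BinaryCofan.IsColimit.hom_ext W.isCoprod
        (?_ : W.in₀ ≫ t ≫ P.π ≫ P.pr₀ = W.in₀ ≫ W.ι ≫ W.ρ ≫ l')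
        (?_ : W.in₁ ≫ t ≫ P.π ≫ P.pr₀ = W.in₁ ≫ W.ι ≫ W.ρ ≫ l')
      · rw [reassoc_of% ht₀, P.fac₀, hq', reassoc_of% W.fac₀, hl']
      · rw [reassoc_of% ht₁, hK₀, reassoc_of% W.fac₁, hl']⟩
    refine ⟨sq3.lift ≫ P.π ≫ P.pr₁, ?_, ?_⟩
    · rw [reassoc_of% sq3.fac_left, reassoc_of% ht₀, P.fac₁, hq']
    · rw [reassoc_of% sq3.fac_left, reassoc_of% ht₁, hK₁]

end WMC
end

section
/- Let C be a category equipped with a class of cofibrations and a class of fibrations, let X be a cofibrant object admitting at least one weak cylinder object and Y a fibrant object admitting at least one weak path object (and assume X ⊔ X and Y × Y exist). Then the homotopy relation on the set of morphisms from X to Y is an equivalence relation (reflexive, symmetric and transitive). -/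
open CategoryTheory CategoryTheory.Limits

universe w v u

namespace WMC

variable {C : Type u} [Category.{v} C]

variable [HasInitial C] [HasTerminal C]

/-- `f` and `g` are homotopic: they are homotopic relative to some weak cylinder object
for `X` or some weak path object for `Y`. -/
def Homotopic (Cof Fib : MorphismProperty C) {X Y : C} (f g : X ⟶ Y) : Prop :=
  (∃ W : WeakCylinder Cof Fib X, CylHomotopic W f g) ∨
  (∃ P : WeakPath Cof Fib Y, PathHomotopic P f g)

section Aux

variable {C : Type u} [Category.{v} C] [HasInitial C] [HasTerminal C]
variable {Cof Fib : MorphismProperty C}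

lemma extend_of_acyclicCof (hFib : IsFibClass Fib) {A B Y : C} {i : A ⟶ B}
    (hi : IsAcyclicCof Cof Fib i) (hY : Fibrant Fib Y) (f : A ⟶ Y) :
    ∃ l : B ⟶ Y, i ≫ l = f := by
  have hlp : HasLiftingProperty i (terminal.from Y) :=
    hi.2 (terminal.from Y) hY hY hFib.terminal_fibrant
  have sq : CommSq f i (terminal.from Y) (terminal.from B) := ⟨terminal.hom_ext _ _⟩
  exact ⟨sq.lift, sq.fac_left⟩

lemma lift_of_acyclicFib (hCof : IsCofClass Cof) {T Y X : C} {e : T ⟶ Y}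
    (he : IsAcyclicFib Cof Fib e) (hX : Cofibrant Cof X) (f : X ⟶ Y) :
    ∃ s : X ⟶ T, s ≫ e = f := by
  have hlp : HasLiftingProperty (initial.to X) e :=
    he.2 (initial.to X) hX hCof.initial_cofibrant hX
  have sq : CommSq (initial.to T) (initial.to X) e f := ⟨initial.hom_ext _ _⟩
  exact ⟨sq.lift, sq.fac_right⟩

lemma fib_transfer (hFib : IsFibClass Fib) {P A B X : C} {p : B ⟶ A} {f : X ⟶ A}
    {fst : P ⟶ X} {snd : P ⟶ B} (h : IsPullback fst snd f p)
    (hp : Fib p) (hA : Fibrant Fib A) (hXf : Fibrant Fib X) :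
    Fib fst ∧ Fibrant Fib P := by
  obtain ⟨P', fst', snd', h', hfst'⟩ := hFib.pullback_mem p f hp hA hXf
  have hP' : Fibrant Fib P' := by
    have e : terminal.from P' = fst' ≫ terminal.from X := terminal.hom_ext _ _
    rw [Fibrant, e]
    exact hFib.comp_mem _ _ hfst' hXf
  have hiso : Fib (h.isoIsPullback _ _ h').hom :=
    hFib.iso_mem _ inferInstance hP'
  have hfst : Fib fst := by
    rw [← IsPullback.isoIsPullback_hom_fst (h := h) (h' := h')]
    exact hFib.comp_mem _ _ hiso hfst'
  refine ⟨hfst, ?_⟩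
  have e : terminal.from P = fst ≫ terminal.from X := terminal.hom_ext _ _
  rw [Fibrant, e]
  exact hFib.comp_mem _ _ hfst hXf

lemma cof_transfer (hCof : IsCofClass Cof) {P A B X : C} {i : A ⟶ B} {f : A ⟶ X}
    {inl : X ⟶ P} {inr : B ⟶ P} (h : IsPushout f i inl inr)
    (hi : Cof i) (hA : Cofibrant Cof A) (hXc : Cofibrant Cof X) :
    Cof inl ∧ Cofibrant Cof P := by
  obtain ⟨Q, inl', inr', h', hinl'⟩ := hCof.pushout_mem i f hi hA hXc
  have hQ : Cofibrant Cof Q := by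
    have e : initial.to Q = initial.to X ≫ inl' := initial.hom_ext _ _
    rw [Cofibrant, e]
    exact hCof.comp_mem _ _ hXc hinl'
  have hiso : Cof (h'.isoIsPushout _ _ h).hom :=
    hCof.iso_mem _ inferInstance hQ
  have hinl : Cof inl := by
    rw [← IsPushout.inl_isoIsPushout_hom (h := h') (h' := h)]
    exact hCof.comp_mem _ _ hinl' hiso
  refine ⟨hinl, ?_⟩
  have e : initial.to P = initial.to X ≫ inl := initial.hom_ext _ _
  rw [Cofibrant, e]
  exact hCof.comp_mem _ _ hXc hinl

lemma path_fibrant (hFib : IsFibClass Fib) {Y : C} (hY : Fibrant Fib Y)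
    (P : WeakPath Cof Fib Y) : Fibrant Fib P.YY ∧ Fibrant Fib P.Pth := by
  have hpb : IsPullback P.pr₀ P.pr₁ (terminal.from Y) (terminal.from Y) := by
    have h := IsPullback.of_is_product' P.isProd terminalIsTerminal
    rwa [show (terminalIsTerminal : IsTerminal (⊤_ C)).from Y = terminal.from Y from
      terminal.hom_ext _ _] at h
  obtain ⟨hpr₀, hYY⟩ := fib_transfer hFib hpb hY hFib.terminal_fibrant hY
  refine ⟨hYY, ?_⟩
  have e : terminal.from P.Pth = (P.π ≫ P.pr₀) ≫ terminal.from Y := terminal.hom_ext _ _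
  rw [Fibrant, e]
  exact hFib.comp_mem _ _ P.π_pr₀_acyclic.1 hY

lemma cyl_cofibrant (hCof : IsCofClass Cof) {X : C} (hX : Cofibrant Cof X)
    (W : WeakCylinder Cof Fib X) : Cofibrant Cof W.XX ∧ Cofibrant Cof W.Cyl := by
  have hpo : IsPushout (initial.to X) (initial.to X) W.in₀ W.in₁ := by
    have h := IsPushout.of_is_coproduct' W.isCoprod initialIsInitial
    rwa [show (initialIsInitial : IsInitial (⊥_ C)).to X = initial.to X from
      initial.hom_ext _ _] at h
  obtain ⟨hin₀, hXX⟩ := cof_transfer hCof hpo hX hCof.initial_cofibrant hX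
  refine ⟨hXX, ?_⟩
  have e : initial.to W.Cyl = initial.to W.XX ≫ W.ι := initial.hom_ext _ _
  rw [Cofibrant, e]
  exact hCof.comp_mem _ _ hXX W.ι_cof

end Aux

section Conv

variable {C : Type u} [Category.{v} C] [HasInitial C] [HasTerminal C]
variable {Cof Fib : MorphismProperty C} {X Y : C}

/-- Constant path at `k`. -/
lemma const_path (hCof : IsCofClass Cof) (hX : Cofibrant Cof X)
    (P : WeakPath Cof Fib Y) (k : X ⟶ Y) :
    ∃ c : X ⟶ P.Pth, c ≫ P.π ≫ P.pr₀ = k ∧ c ≫ P.π ≫ P.pr₁ = k := by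
  obtain ⟨s, hs⟩ := lift_of_acyclicFib hCof P.e_acyclic hX k
  refine ⟨s ≫ P.σ, ?_, ?_⟩
  · rw [Category.assoc, P.fac₀, hs]
  · rw [Category.assoc, P.fac₁, hs]

/-- Constant cylinder homotopy at `k`. -/
lemma const_cyl (hFib : IsFibClass Fib) (hY : Fibrant Fib Y)
    (W : WeakCylinder Cof Fib X) (k : X ⟶ Y) :
    ∃ c : W.Cyl ⟶ Y, W.in₀ ≫ W.ι ≫ c = k ∧ W.in₁ ≫ W.ι ≫ c = k := by
  obtain ⟨kt, hkt⟩ := extend_of_acyclicCof hFib W.e_acyclic hY k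
  refine ⟨W.ρ ≫ kt, ?_, ?_⟩
  · rw [reassoc_of% W.fac₀, hkt]
  · rw [reassoc_of% W.fac₁, hkt]

/-- The key gluing lemma: a cylinder homotopy `(a, b)` and a path homotopy `(a, c)`
combine to a path homotopy `(b, c)`. -/
lemma key (hCof : IsCofClass Cof) (hFib : IsFibClass Fib)
    (hX : Cofibrant Cof X) (hY : Fibrant Fib Y)
    (W : WeakCylinder Cof Fib X) (P : WeakPath Cof Fib Y) {a b c : X ⟶ Y}
    (h : W.Cyl ⟶ Y) (h0 : W.in₀ ≫ W.ι ≫ h = a) (h1 : W.in₁ ≫ W.ι ≫ h = b)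
    (H : X ⟶ P.Pth) (H0 : H ≫ P.π ≫ P.pr₀ = a) (H1 : H ≫ P.π ≫ P.pr₁ = c) :
    PathHomotopic P b c := by
  obtain ⟨ct, hct⟩ := extend_of_acyclicCof hFib W.e_acyclic hY c
  obtain ⟨K, hK0, hK1⟩ : ∃ K : W.Cyl ⟶ P.YY, K ≫ P.pr₀ = h ∧ K ≫ P.pr₁ = W.ρ ≫ ct :=
    ⟨_, (BinaryFan.IsLimit.lift' P.isProd h (W.ρ ≫ ct)).2⟩
  obtain ⟨hYY, hPth⟩ := path_fibrant hFib hY P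
  haveI hlp : HasLiftingProperty (W.in₀ ≫ W.ι) P.π :=
    W.in₀_ι_acyclic.2 P.π P.π_fib hPth hYY
  have sq : CommSq H (W.in₀ ≫ W.ι) P.π K := by
    constructor
    apply BinaryFan.IsLimit.hom_ext P.isProd
    all_goals change (H ≫ P.π) ≫ (_ : P.YY ⟶ Y) = ((W.in₀ ≫ W.ι) ≫ K) ≫ (_ : P.YY ⟶ Y)
    · simp only [BinaryFan.mk_fst, Category.assoc, hK0, h0, H0]
    · simp only [BinaryFan.mk_snd, Category.assoc, hK1, H1, reassoc_of% W.fac₀, hct]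
  refine ⟨W.in₁ ≫ W.ι ≫ sq.lift, ?_, ?_⟩
  · simp only [Category.assoc, reassoc_of% sq.fac_right, hK0, h1]
  · simp only [Category.assoc, reassoc_of% sq.fac_right, hK1, reassoc_of% W.fac₁, hct]

/-- Variant: a cylinder homotopy `(a, b)` and a path homotopy `(c, a)`
combine to a path homotopy `(c, b)`. -/
lemma key' (hCof : IsCofClass Cof) (hFib : IsFibClass Fib)
    (hX : Cofibrant Cof X) (hY : Fibrant Fib Y)
    (W : WeakCylinder Cof Fib X) (P : WeakPath Cof Fib Y) {a b c : X ⟶ Y}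
    (h : W.Cyl ⟶ Y) (h0 : W.in₀ ≫ W.ι ≫ h = a) (h1 : W.in₁ ≫ W.ι ≫ h = b)
    (H : X ⟶ P.Pth) (H0 : H ≫ P.π ≫ P.pr₀ = c) (H1 : H ≫ P.π ≫ P.pr₁ = a) :
    PathHomotopic P c b := by
  obtain ⟨ct, hct⟩ := extend_of_acyclicCof hFib W.e_acyclic hY c
  obtain ⟨K, hK0, hK1⟩ : ∃ K : W.Cyl ⟶ P.YY, K ≫ P.pr₀ = W.ρ ≫ ct ∧ K ≫ P.pr₁ = h :=
    ⟨_, (BinaryFan.IsLimit.lift' P.isProd (W.ρ ≫ ct) h).2⟩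
  obtain ⟨hYY, hPth⟩ := path_fibrant hFib hY P
  haveI hlp : HasLiftingProperty (W.in₀ ≫ W.ι) P.π :=
    W.in₀_ι_acyclic.2 P.π P.π_fib hPth hYY
  have sq : CommSq H (W.in₀ ≫ W.ι) P.π K := by
    constructor
    apply BinaryFan.IsLimit.hom_ext P.isProd
    all_goals change (H ≫ P.π) ≫ (_ : P.YY ⟶ Y) = ((W.in₀ ≫ W.ι) ≫ K) ≫ (_ : P.YY ⟶ Y)
    · simp only [BinaryFan.mk_fst, Category.assoc, hK0, H0, reassoc_of% W.fac₀, hct]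
    · simp only [BinaryFan.mk_snd, Category.assoc, hK1, h0, H1]
  refine ⟨W.in₁ ≫ W.ι ≫ sq.lift, ?_, ?_⟩
  · simp only [Category.assoc, reassoc_of% sq.fac_right, hK0, reassoc_of% W.fac₁, hct]
  · simp only [Category.assoc, reassoc_of% sq.fac_right, hK1, h1]

/-- A path homotopy yields a cylinder homotopy (dual gluing). -/
lemma pathHomotopic_to_cyl (hCof : IsCofClass Cof) (hFib : IsFibClass Fib)
    (hX : Cofibrant Cof X) (hY : Fibrant Fib Y)
    (W : WeakCylinder Cof Fib X) (P : WeakPath Cof Fib Y) {f g : X ⟶ Y}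
    (hfg : PathHomotopic P f g) : CylHomotopic W f g := by
  obtain ⟨H, H0, H1⟩ := hfg
  obtain ⟨s, hs⟩ := lift_of_acyclicFib hCof P.e_acyclic hX f
  obtain ⟨ft, hft⟩ := extend_of_acyclicCof hFib W.e_acyclic hY f
  obtain ⟨u, hu0, hu1⟩ : ∃ u : W.XX ⟶ P.Pth, W.in₀ ≫ u = s ≫ P.σ ∧ W.in₁ ≫ u = H :=
    ⟨_, (BinaryCofan.IsColimit.desc' W.isCoprod (s ≫ P.σ) H).2⟩
  obtain ⟨hXX, hCyl⟩ := cyl_cofibrant hCof hX W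
  haveI hlp : HasLiftingProperty W.ι (P.π ≫ P.pr₀) :=
    P.π_pr₀_acyclic.2 W.ι W.ι_cof hXX hCyl
  have sq : CommSq u W.ι (P.π ≫ P.pr₀) (W.ρ ≫ ft) := by
    constructor
    apply BinaryCofan.IsColimit.hom_ext W.isCoprod
    all_goals change (_ : X ⟶ W.XX) ≫ u ≫ P.π ≫ P.pr₀ = (_ : X ⟶ W.XX) ≫ W.ι ≫ W.ρ ≫ ft
    · simp only [BinaryCofan.mk_inl, reassoc_of% hu0, reassoc_of% W.fac₀,
        Category.assoc, P.fac₀, hs, hft]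
    · simp only [BinaryCofan.mk_inr, reassoc_of% hu1, reassoc_of% W.fac₁,
        Category.assoc, H0, hft]
  refine ⟨sq.lift ≫ P.π ≫ P.pr₁, ?_, ?_⟩
  · simp only [Category.assoc, reassoc_of% sq.fac_left, reassoc_of% hu0, P.fac₁, hs]
  · simp only [Category.assoc, reassoc_of% sq.fac_left, reassoc_of% hu1, H1]
end Conv


lemma cylHomotopic_to_path {C : Type u} [Category.{v} C] [HasInitial C] [HasTerminal C]
    {Cof Fib : MorphismProperty C} {X Y : C}
    (hCof : IsCofClass Cof) (hFib : IsFibClass Fib)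
    (hX : Cofibrant Cof X) (hY : Fibrant Fib Y)
    (W : WeakCylinder Cof Fib X) (P : WeakPath Cof Fib Y) {f g : X ⟶ Y}
    (hfg : CylHomotopic W f g) : PathHomotopic P f g := by
  obtain ⟨h, h0, h1⟩ := hfg
  obtain ⟨cH, c0, c1⟩ := const_path hCof hX P f
  exact key' hCof hFib hX hY W P h h0 h1 cH c0 c1

/-- for `X` cofibrant with at least one weak cylinder object and `Y` fibrant
with at least one weak path object, the homotopy relation on maps `X ⟶ Y` is an
equivalence relation. -/
theorem statement2 (Cof Fib : MorphismProperty C)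
    (hCof : IsCofClass Cof) (hFib : IsFibClass Fib)
    {X Y : C} (hX : Cofibrant Cof X) (hY : Fibrant Fib Y)
    (hW : Nonempty (WeakCylinder Cof Fib X)) (hP : Nonempty (WeakPath Cof Fib Y)) :
    _root_.Equivalence (fun f g : X ⟶ Y => Homotopic Cof Fib f g) := by
  obtain ⟨W⟩ := hW
  obtain ⟨P⟩ := hP
  have toCyl : ∀ {f g : X ⟶ Y}, Homotopic Cof Fib f g → CylHomotopic W f g := by
    rintro f g (⟨W', h'⟩ | ⟨P', h'⟩)
    · exact pathHomotopic_to_cyl hCof hFib hX hY W P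
        (cylHomotopic_to_path hCof hFib hX hY W' P h')
    · exact pathHomotopic_to_cyl hCof hFib hX hY W P' h'
  have symmPath : ∀ {f g : X ⟶ Y}, Homotopic Cof Fib f g → PathHomotopic P g f := by
    intro f g hfg
    obtain ⟨h, h0, h1⟩ := toCyl hfg
    obtain ⟨cH, c0, c1⟩ := const_path hCof hX P f
    exact key hCof hFib hX hY W P h h0 h1 cH c0 c1
  refine ⟨?_, ?_, ?_⟩
  · intro f
    obtain ⟨c, c0, c1⟩ := const_cyl hFib hY W f
    exact Or.inl ⟨W, c, c0, c1⟩
  · intro f g hfg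
    exact Or.inr ⟨P, symmPath hfg⟩
  · intro f g k hfg hgk
    have hcgf : CylHomotopic W g f :=
      pathHomotopic_to_cyl hCof hFib hX hY W P (symmPath hfg)
    obtain ⟨h, h0, h1⟩ := hcgf
    have hgk' : PathHomotopic P g k := by
      rcases hgk with ⟨W', h'⟩ | ⟨P', h'⟩
      · exact cylHomotopic_to_path hCof hFib hX hY W' P h'
      · exact cylHomotopic_to_path hCof hFib hX hY W P
          (pathHomotopic_to_cyl hCof hFib hX hY W P' h')
    obtain ⟨H, H0, H1⟩ := hgk'
    exact Or.inr ⟨P, key hCof hFib hX hY W P h h0 h1 H H0 H1⟩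

end WMC
end

section
/- Let C be a category equipped with a class of cofibrations and a class of fibrations satisfying the factorization axiom (every morphism from a cofibrant object to a fibrant object factors both as a cofibration followed by an acyclic fibration, and as an acyclic cofibration followed by a fibration), and in which every bifibrant object admits both a weak cylinder object and a weak path object. Let C^bf denote the full subcategory of bifibrant objects and let Q : C^bf → Ho(C^bf) denote the quotient functor onto the quotient category by the homotopy relation. Then Q sends every acyclic cofibration between bifibrant objects to an isomorphism, and Q exhibits Ho(C^bf) as the localization of C^bf at the class of acyclic cofibrations: any functor from C^bf which sends acyclic cofibrations to isomorphisms factors uniquely through Q. Dually, Q is also the localization of C^bf at the class of acyclic fibrations. -/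
open CategoryTheory CategoryTheory.Limits

universe w v u

namespace WMC

variable {C : Type u} [Category.{v} C]

variable [HasInitial C] [HasTerminal C]

/-- The full subcategory of bifibrant objects. -/
abbrev BF (Cof Fib : MorphismProperty C) : Type u :=
  ObjectProperty.FullSubcategory (fun X : C => Cofibrant Cof X ∧ Fibrant Fib X)

/-- The homotopy relation on the category of bifibrant objects. -/
def homotopyRel (Cof Fib : MorphismProperty C) : HomRel (BF Cof Fib) :=
  fun _ _ f g =>
    Homotopic Cof Fib ((ObjectProperty.ι _).map f) ((ObjectProperty.ι _).map g)

/-- Acyclic cofibrations in the category of bifibrant objects. -/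
def bfAcyclicCof (Cof Fib : MorphismProperty C) : MorphismProperty (BF Cof Fib) :=
  fun _ _ f => IsAcyclicCof Cof Fib ((ObjectProperty.ι _).map f)

/-- Acyclic fibrations in the category of bifibrant objects. -/
def bfAcyclicFib (Cof Fib : MorphismProperty C) : MorphismProperty (BF Cof Fib) :=
  fun _ _ f => IsAcyclicFib Cof Fib ((ObjectProperty.ι _).map f)

section Aux

variable [HasInitial C] [HasTerminal C] {Cof Fib : MorphismProperty C}

lemma cofibrant_comp (hCof : IsCofClass Cof) {X Y : C} (f : X ⟶ Y)
    (hX : Cofibrant Cof X) (hf : Cof f) : Cofibrant Cof Y := by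
  have := hCof.comp_mem _ f hX hf
  rwa [initial.to_comp] at this

lemma fibrant_comp (hFib : IsFibClass Fib) {X Y : C} (f : X ⟶ Y)
    (hY : Fibrant Fib Y) (hf : Fib f) : Fibrant Fib X := by
  have := hFib.comp_mem f _ hf hY
  rwa [terminal.comp_from] at this

lemma IsAcyclicCof.comp' {X Y Z : C} {f : X ⟶ Y} {g : Y ⟶ Z} (hCof : IsCofClass Cof)
    (hf : IsAcyclicCof Cof Fib f) (hg : IsAcyclicCof Cof Fib g) :
    IsAcyclicCof Cof Fib (f ≫ g) :=
  ⟨hCof.comp_mem _ _ hf.1 hg.1, fun p hp h1 h2 => by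
    haveI := hf.2 p hp h1 h2
    haveI := hg.2 p hp h1 h2
    infer_instance⟩

lemma IsAcyclicFib.comp' {X Y Z : C} {f : X ⟶ Y} {g : Y ⟶ Z} (hFib : IsFibClass Fib)
    (hf : IsAcyclicFib Cof Fib f) (hg : IsAcyclicFib Cof Fib g) :
    IsAcyclicFib Cof Fib (f ≫ g) :=
  ⟨hFib.comp_mem _ _ hf.1 hg.1, fun i hi h1 h2 => by
    haveI := hf.2 i hi h1 h2
    haveI := hg.2 i hi h1 h2
    infer_instance⟩

/-- Fibrancy facts about a weak path object on a fibrant object. -/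
lemma path_facts (hFib : IsFibClass Fib) {Y : C} (hY : Fibrant Fib Y)
    (P : WeakPath Cof Fib Y) :
    Fib P.pr₀ ∧ Fibrant Fib P.YY ∧ Fibrant Fib P.Pth := by
  obtain ⟨Q, fst, snd, hpb, hfst⟩ :=
    hFib.pullback_mem (terminal.from Y) (terminal.from Y) hY hFib.terminal_fibrant hY
  have hQ : Fibrant Fib Q := fibrant_comp hFib fst hY hfst
  have hour : IsPullback P.pr₀ P.pr₁ (terminal.from Y) (terminal.from Y) := by
    have h := IsPullback.of_is_product' P.isProd terminalIsTerminal
    rwa [terminal.hom_ext (terminalIsTerminal.from Y) (terminal.from Y)] at h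
  have hφ : Fib (hour.isoIsPullback _ _ hpb).hom :=
    hFib.iso_mem _ inferInstance hQ
  have hpr₀ : Fib P.pr₀ := by
    rw [← IsPullback.isoIsPullback_hom_fst (h := hour) (h' := hpb)]
    exact hFib.comp_mem _ _ hφ hfst
  have hYY : Fibrant Fib P.YY := fibrant_comp hFib P.pr₀ hY hpr₀
  exact ⟨hpr₀, hYY, fibrant_comp hFib P.π hYY P.π_fib⟩

/-- Cofibrancy facts about a weak cylinder object on a cofibrant object. -/
lemma cyl_facts (hCof : IsCofClass Cof) {X : C} (hX : Cofibrant Cof X)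
    (W : WeakCylinder Cof Fib X) :
    Cof W.in₀ ∧ Cofibrant Cof W.XX ∧ Cofibrant Cof W.Cyl := by
  obtain ⟨Q, inl, inr, hpo, hinl⟩ :=
    hCof.pushout_mem (initial.to X) (initial.to X) hX hCof.initial_cofibrant hX
  have hQ : Cofibrant Cof Q := cofibrant_comp hCof inl hX hinl
  have hour : IsPushout (initial.to X) (initial.to X) W.in₀ W.in₁ := by
    have h := IsPushout.of_is_coproduct' W.isCoprod initialIsInitial
    rwa [initial.hom_ext (initialIsInitial.to X) (initial.to X)] at h
  have hφ : Cof (hour.isoIsPushout _ _ hpo).inv :=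
    hCof.iso_mem _ inferInstance hQ
  have hin₀ : Cof W.in₀ := by
    rw [← IsPushout.inl_isoIsPushout_inv (h := hour) (h' := hpo)]
    exact hCof.comp_mem _ _ hinl hφ
  have hXX : Cofibrant Cof W.XX := cofibrant_comp hCof W.in₀ hX hin₀
  exact ⟨hin₀, hXX, cofibrant_comp hCof W.ι hXX W.ι_cof⟩

/-- Constant paths: any map from a cofibrant object factors as a "constant path". -/
lemma constPath (hCof : IsCofClass Cof) {A Y : C} (hA : Cofibrant Cof A)
    (P : WeakPath Cof Fib Y) (f : A ⟶ Y) :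
    ∃ c : A ⟶ P.Pth, c ≫ P.π ≫ P.pr₀ = f ∧ c ≫ P.π ≫ P.pr₁ = f := by
  haveI := P.e_acyclic.2 (initial.to A) hA hCof.initial_cofibrant hA
  have sq : CommSq (initial.to P.T) (initial.to A) P.e f := ⟨initial.hom_ext _ _⟩
  refine ⟨sq.lift ≫ P.σ, ?_, ?_⟩
  · rw [Category.assoc, P.fac₀, sq.fac_right]
  · rw [Category.assoc, P.fac₁, sq.fac_right]

/-- Constant cylinders: any map to a fibrant object extends as a "constant homotopy". -/
lemma constCyl (hFib : IsFibClass Fib) {X Z : C} (hZ : Fibrant Fib Z)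
    (W : WeakCylinder Cof Fib X) (f : X ⟶ Z) :
    ∃ c : W.Cyl ⟶ Z, W.in₀ ≫ W.ι ≫ c = f ∧ W.in₁ ≫ W.ι ≫ c = f := by
  haveI := W.e_acyclic.2 (terminal.from Z) hZ hZ hFib.terminal_fibrant
  have sq : CommSq f W.e (terminal.from Z) (terminal.from W.D) := ⟨terminal.hom_ext _ _⟩
  refine ⟨W.ρ ≫ sq.lift, ?_, ?_⟩
  · rw [reassoc_of% W.fac₀, sq.fac_left]
  · rw [reassoc_of% W.fac₁, sq.fac_left]

/-- Maps equalized by an acyclic cofibration are path homotopic. -/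
lemma acyclicCof_cancel (hCof : IsCofClass Cof) (hFib : IsFibClass Fib)
    {A B Z : C} {i : A ⟶ B} (hi : IsAcyclicCof Cof Fib i) (hA : Cofibrant Cof A)
    (hZf : Fibrant Fib Z) (P : WeakPath Cof Fib Z) (u v : B ⟶ Z)
    (huv : i ≫ u = i ≫ v) : PathHomotopic P u v := by
  obtain ⟨hpr₀, hYY, hPth⟩ := path_facts hFib hZf P
  obtain ⟨c, hc₀, hc₁⟩ := constPath hCof hA P (i ≫ u)
  obtain ⟨m, hm₀, hm₁⟩ : {l : B ⟶ P.YY // l ≫ P.pr₀ = u ∧ l ≫ P.pr₁ = v} :=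
    BinaryFan.IsLimit.lift' P.isProd u v
  haveI := hi.2 P.π P.π_fib hPth hYY
  have sq : CommSq c i P.π m := ⟨by
    apply BinaryFan.IsLimit.hom_ext P.isProd
    · change (c ≫ P.π) ≫ P.pr₀ = (i ≫ m) ≫ P.pr₀
      simp only [BinaryFan.mk_fst, Category.assoc, hm₀, hc₀]
    · change (c ≫ P.π) ≫ P.pr₁ = (i ≫ m) ≫ P.pr₁
      simp only [BinaryFan.mk_snd, Category.assoc, hm₁, hc₁]
      exact huv⟩
  refine ⟨sq.lift, ?_, ?_⟩
  · rw [← Category.assoc, sq.fac_right, hm₀]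
  · rw [← Category.assoc, sq.fac_right, hm₁]

/-- Maps equalized by an acyclic fibration are cylinder homotopic. -/
lemma acyclicFib_cancel (hCof : IsCofClass Cof) (hFib : IsFibClass Fib)
    {A X Y : C} {p : X ⟶ Y} (hp : IsAcyclicFib Cof Fib p) (hXf : Fibrant Fib X)
    (hAc : Cofibrant Cof A) (W : WeakCylinder Cof Fib A) (u v : A ⟶ X)
    (huv : u ≫ p = v ≫ p) : CylHomotopic W u v := by
  obtain ⟨hin₀, hXX, hCyl⟩ := cyl_facts hCof hAc W
  obtain ⟨c, hc₀, hc₁⟩ := constCyl hFib hXf W u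
  obtain ⟨N, hN₀, hN₁⟩ : {l : W.XX ⟶ X // W.in₀ ≫ l = u ∧ W.in₁ ≫ l = v} :=
    BinaryCofan.IsColimit.desc' W.isCoprod u v
  haveI := hp.2 W.ι W.ι_cof hXX hCyl
  have sq : CommSq N W.ι p (c ≫ p) := ⟨by
    apply BinaryCofan.IsColimit.hom_ext W.isCoprod
    · change W.in₀ ≫ N ≫ p = W.in₀ ≫ W.ι ≫ c ≫ p
      simp only [BinaryCofan.mk_inl, reassoc_of% hN₀, reassoc_of% hc₀]
    · change W.in₁ ≫ N ≫ p = W.in₁ ≫ W.ι ≫ c ≫ p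
      simp only [BinaryCofan.mk_inr, reassoc_of% hN₁, reassoc_of% hc₁]
      exact huv.symm⟩
  refine ⟨sq.lift, ?_, ?_⟩
  · rw [sq.fac_left]; exact hN₀
  · rw [sq.fac_left]; exact hN₁

/-- A cylinder homotopy yields a path homotopy. -/
lemma cyl_to_path (hCof : IsCofClass Cof) (hFib : IsFibClass Fib)
    {X Y : C} (hXc : Cofibrant Cof X) (hYf : Fibrant Fib Y)
    (W : WeakCylinder Cof Fib X) (P : WeakPath Cof Fib Y) {f g : X ⟶ Y}
    (h : CylHomotopic W f g) : PathHomotopic P f g := by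
  obtain ⟨H, h0, h1⟩ := h
  obtain ⟨hpr₀, hYY, hPth⟩ := path_facts hFib hYf P
  obtain ⟨c', hc'₀, hc'₁⟩ := constPath hCof hXc P f
  obtain ⟨c, hc₀, hc₁⟩ := constCyl hFib hYf W f
  obtain ⟨M, hM₀, hM₁⟩ : {l : W.Cyl ⟶ P.YY // l ≫ P.pr₀ = c ∧ l ≫ P.pr₁ = H} :=
    BinaryFan.IsLimit.lift' P.isProd c H
  haveI := W.in₀_ι_acyclic.2 P.π P.π_fib hPth hYY
  have sq : CommSq c' (W.in₀ ≫ W.ι) P.π M := ⟨by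
    apply BinaryFan.IsLimit.hom_ext P.isProd
    · change (c' ≫ P.π) ≫ P.pr₀ = ((W.in₀ ≫ W.ι) ≫ M) ≫ P.pr₀
      simp only [BinaryFan.mk_fst, Category.assoc, hM₀, hc'₀, hc₀]
    · change (c' ≫ P.π) ≫ P.pr₁ = ((W.in₀ ≫ W.ι) ≫ M) ≫ P.pr₁
      simp only [BinaryFan.mk_snd, Category.assoc, hM₁, hc'₁, h0]⟩
  refine ⟨W.in₁ ≫ W.ι ≫ sq.lift, ?_, ?_⟩
  · simp only [Category.assoc]
    rw [reassoc_of% sq.fac_right, hM₀]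
    exact hc₁
  · simp only [Category.assoc]
    rw [reassoc_of% sq.fac_right, hM₁]
    exact h1

/-- A path homotopy yields a cylinder homotopy. -/
lemma path_to_cyl (hCof : IsCofClass Cof) (hFib : IsFibClass Fib)
    {X Y : C} (hXc : Cofibrant Cof X) (hYf : Fibrant Fib Y)
    (W : WeakCylinder Cof Fib X) (P : WeakPath Cof Fib Y) {f g : X ⟶ Y}
    (h : PathHomotopic P f g) : CylHomotopic W f g := by
  obtain ⟨k, k0, k1⟩ := h
  obtain ⟨hin₀, hXX, hCyl⟩ := cyl_facts hCof hXc W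
  obtain ⟨c', hc'₀, hc'₁⟩ := constPath hCof hXc P f
  obtain ⟨c, hc₀, hc₁⟩ := constCyl hFib hYf W f
  obtain ⟨N, hN₀, hN₁⟩ : {l : W.XX ⟶ P.Pth // W.in₀ ≫ l = c' ∧ W.in₁ ≫ l = k} :=
    BinaryCofan.IsColimit.desc' W.isCoprod c' k
  haveI := P.π_pr₀_acyclic.2 W.ι W.ι_cof hXX hCyl
  have sq : CommSq N W.ι (P.π ≫ P.pr₀) c := ⟨by
    apply BinaryCofan.IsColimit.hom_ext W.isCoprod
    · change W.in₀ ≫ N ≫ P.π ≫ P.pr₀ = W.in₀ ≫ W.ι ≫ c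
      simp only [BinaryCofan.mk_inl, Category.assoc, reassoc_of% hN₀, hc'₀, hc₀]
    · change W.in₁ ≫ N ≫ P.π ≫ P.pr₀ = W.in₁ ≫ W.ι ≫ c
      simp only [BinaryCofan.mk_inr, Category.assoc, reassoc_of% hN₁, k0, hc₁]⟩
  refine ⟨sq.lift ≫ P.π ≫ P.pr₁, ?_, ?_⟩
  · rw [reassoc_of% sq.fac_left, reassoc_of% hN₀]
    exact hc'₁
  · rw [reassoc_of% sq.fac_left, reassoc_of% hN₁]
    exact k1

end Aux

section Main

variable [HasInitial C] [HasTerminal C] {Cof Fib : MorphismProperty C}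

/-- The quotient functor inverts acyclic cofibrations between bifibrant objects. -/
lemma Q_inverts_cof (hCof : IsCofClass Cof) (hFib : IsFibClass Fib)
    (hpath : ∀ X : C, Cofibrant Cof X → Fibrant Fib X → Nonempty (WeakPath Cof Fib X)) :
    (bfAcyclicCof Cof Fib).IsInvertedBy (Quotient.functor (homotopyRel Cof Fib)) := by
  intro X Y f hf
  replace hf : IsAcyclicCof Cof Fib f.hom := hf
  haveI := hf.2 (terminal.from X.obj) X.property.2 X.property.2 hFib.terminal_fibrant
  have sq : CommSq (𝟙 X.obj) f.hom (terminal.from X.obj) (terminal.from Y.obj) :=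
    ⟨terminal.hom_ext _ _⟩
  obtain ⟨P⟩ := hpath Y.obj Y.property.1 Y.property.2
  have hhom : PathHomotopic P (sq.lift ≫ f.hom) (𝟙 Y.obj) :=
    acyclicCof_cancel hCof hFib hf X.property.1 Y.property.2 P _ _ (by
      rw [← Category.assoc, sq.fac_left, Category.id_comp, Category.comp_id])
  refine ⟨⟨(Quotient.functor (homotopyRel Cof Fib)).map (ObjectProperty.homMk (X := Y) (Y := X) sq.lift), ?_, ?_⟩⟩
  · rw [← Functor.map_comp,
      show f ≫ (ObjectProperty.homMk (X := Y) (Y := X) sq.lift) = 𝟙 X from by ext; exact sq.fac_left, CategoryTheory.Functor.map_id]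
  · rw [← Functor.map_comp,
      CategoryTheory.Quotient.sound _ (show homotopyRel Cof Fib ((ObjectProperty.homMk (X := Y) (Y := X) sq.lift) ≫ f) (𝟙 Y)
        from Or.inr ⟨P, hhom⟩),
      CategoryTheory.Functor.map_id]

/-- The quotient functor inverts acyclic fibrations between bifibrant objects. -/
lemma Q_inverts_fib (hCof : IsCofClass Cof) (hFib : IsFibClass Fib)
    (hcyl : ∀ X : C, Cofibrant Cof X → Fibrant Fib X → Nonempty (WeakCylinder Cof Fib X)) :
    (bfAcyclicFib Cof Fib).IsInvertedBy (Quotient.functor (homotopyRel Cof Fib)) := by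
  intro X Y f hf
  replace hf : IsAcyclicFib Cof Fib f.hom := hf
  haveI := hf.2 (initial.to Y.obj) Y.property.1 hCof.initial_cofibrant Y.property.1
  have sq : CommSq (initial.to X.obj) (initial.to Y.obj) f.hom (𝟙 Y.obj) :=
    ⟨initial.hom_ext _ _⟩
  obtain ⟨W⟩ := hcyl X.obj X.property.1 X.property.2
  have hhom : CylHomotopic W (f.hom ≫ sq.lift) (𝟙 X.obj) :=
    acyclicFib_cancel hCof hFib hf X.property.2 X.property.1 W _ _ (by
      rw [Category.assoc, sq.fac_right, Category.comp_id, Category.id_comp])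
  refine ⟨⟨(Quotient.functor (homotopyRel Cof Fib)).map (ObjectProperty.homMk (X := Y) (Y := X) sq.lift), ?_, ?_⟩⟩
  · rw [← Functor.map_comp,
      CategoryTheory.Quotient.sound _ (show homotopyRel Cof Fib (f ≫ (ObjectProperty.homMk (X := Y) (Y := X) sq.lift)) (𝟙 X)
        from Or.inl ⟨W, hhom⟩),
      CategoryTheory.Functor.map_id]
  · rw [← Functor.map_comp,
      show (ObjectProperty.homMk (X := Y) (Y := X) sq.lift) ≫ f = 𝟙 Y from by ext; exact sq.fac_right, CategoryTheory.Functor.map_id]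

/-- Any functor inverting acyclic cofibrations identifies homotopic maps. -/
lemma compat_cof (hCof : IsCofClass Cof) (hFib : IsFibClass Fib)
    (hfac₂ : ∀ {X Y : C} (f : X ⟶ Y), Cofibrant Cof X → Fibrant Fib Y →
      ∃ (Z : C) (i : X ⟶ Z) (q : Z ⟶ Y), IsAcyclicCof Cof Fib i ∧ Fib q ∧ i ≫ q = f)
    (hcyl : ∀ X : C, Cofibrant Cof X → Fibrant Fib X → Nonempty (WeakCylinder Cof Fib X))
    {E : Type*} [Category E] (F : BF Cof Fib ⥤ E)
    (hF : (bfAcyclicCof Cof Fib).IsInvertedBy F)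
    (X Y : BF Cof Fib) (f g : X ⟶ Y) (hfg : homotopyRel Cof Fib f g) :
    F.map f = F.map g := by
  obtain ⟨W, H, h0, h1⟩ : ∃ W : WeakCylinder Cof Fib X.obj, CylHomotopic W f.hom g.hom := by
    obtain ⟨W, hW⟩ | ⟨P, hP⟩ := hfg
    · exact ⟨W, hW⟩
    · obtain ⟨W⟩ := hcyl X.obj X.property.1 X.property.2
      exact ⟨W, path_to_cyl hCof hFib X.property.1 Y.property.2 W P hP⟩
  obtain ⟨hin₀, hXX, hCyl⟩ := cyl_facts hCof X.property.1 W
  obtain ⟨Z, w, q, hw, hq, hwq⟩ := hfac₂ (terminal.from W.Cyl) hCyl hFib.terminal_fibrant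
  have hZc : Cofibrant Cof Z := cofibrant_comp hCof w hCyl hw.1
  have hZf : Fibrant Fib Z := by
    show Fib (terminal.from Z)
    rw [terminal.hom_ext (terminal.from Z) q]; exact hq
  haveI := hw.2 (terminal.from Y.obj) Y.property.2 Y.property.2 hFib.terminal_fibrant
  have sq1 : CommSq H w (terminal.from Y.obj) (terminal.from Z) := ⟨terminal.hom_ext _ _⟩
  have hD : Cofibrant Cof W.D := cofibrant_comp hCof W.e X.property.1 W.e_acyclic.1
  obtain ⟨D', k, q', hk, hq', hkq⟩ := hfac₂ (terminal.from W.D) hD hFib.terminal_fibrant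
  have hD'c : Cofibrant Cof D' := cofibrant_comp hCof k hD hk.1
  have hD'f : Fibrant Fib D' := by
    show Fib (terminal.from D')
    rw [terminal.hom_ext (terminal.from D') q']; exact hq'
  haveI := hw.2 (terminal.from D') hD'f hD'f hFib.terminal_fibrant
  have sq2 : CommSq (W.ρ ≫ k) w (terminal.from D') (terminal.from Z) := ⟨terminal.hom_ext _ _⟩
  let Zb : BF Cof Fib := ⟨Z, hZc, hZf⟩
  let D'b : BF Cof Fib := ⟨D', hD'c, hD'f⟩
  let a : X ⟶ Zb := ObjectProperty.homMk <| W.in₀ ≫ W.ι ≫ w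
  let b : X ⟶ Zb := ObjectProperty.homMk <| W.in₁ ≫ W.ι ≫ w
  let r : Zb ⟶ D'b := ObjectProperty.homMk <| sq2.lift
  let h' : Zb ⟶ Y := ObjectProperty.homMk <| sq1.lift
  let e' : X ⟶ D'b := ObjectProperty.homMk <| W.e ≫ k
  have har : a ≫ r = e' := by
    ext
    show (W.in₀ ≫ W.ι ≫ w) ≫ sq2.lift = W.e ≫ k
    simp only [Category.assoc]
    rw [sq2.fac_left, reassoc_of% W.fac₀]
  have hbr : b ≫ r = e' := by
    ext
    show (W.in₁ ≫ W.ι ≫ w) ≫ sq2.lift = W.e ≫ k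
    simp only [Category.assoc]
    rw [sq2.fac_left, reassoc_of% W.fac₁]
  have haf : a ≫ h' = f := by
    ext
    show (W.in₀ ≫ W.ι ≫ w) ≫ sq1.lift = f.hom
    simp only [Category.assoc]
    rw [sq1.fac_left]; exact h0
  have hbg : b ≫ h' = g := by
    ext
    show (W.in₁ ≫ W.ι ≫ w) ≫ sq1.lift = g.hom
    simp only [Category.assoc]
    rw [sq1.fac_left]; exact h1
  have ha : bfAcyclicCof Cof Fib a := by
    show IsAcyclicCof Cof Fib (W.in₀ ≫ W.ι ≫ w)
    rw [← Category.assoc]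
    exact IsAcyclicCof.comp' hCof W.in₀_ι_acyclic hw
  have he' : bfAcyclicCof Cof Fib e' := IsAcyclicCof.comp' hCof W.e_acyclic hk
  haveI := hF a ha
  haveI := hF e' he'
  have h2 : F.map a ≫ F.map r = F.map e' := by rw [← F.map_comp, har]
  have h3 : F.map b ≫ F.map r = F.map e' := by rw [← F.map_comp, hbr]
  haveI : IsIso (F.map a ≫ F.map r) := by rw [h2]; infer_instance
  haveI := IsIso.of_isIso_comp_left (F.map a) (F.map r)
  have hab : F.map a = F.map b := by
    rw [← cancel_mono (F.map r), h2, h3]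
  calc F.map f = F.map (a ≫ h') := by rw [haf]
    _ = F.map a ≫ F.map h' := F.map_comp _ _
    _ = F.map b ≫ F.map h' := by rw [hab]
    _ = F.map (b ≫ h') := (F.map_comp _ _).symm
    _ = F.map g := by rw [hbg]

/-- Any functor inverting acyclic fibrations identifies homotopic maps. -/
lemma compat_fib (hCof : IsCofClass Cof) (hFib : IsFibClass Fib)
    (hfac₁ : ∀ {X Y : C} (f : X ⟶ Y), Cofibrant Cof X → Fibrant Fib Y →
      ∃ (Z : C) (i : X ⟶ Z) (q : Z ⟶ Y), Cof i ∧ IsAcyclicFib Cof Fib q ∧ i ≫ q = f)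
    (hpath : ∀ X : C, Cofibrant Cof X → Fibrant Fib X → Nonempty (WeakPath Cof Fib X))
    {E : Type*} [Category E] (F : BF Cof Fib ⥤ E)
    (hF : (bfAcyclicFib Cof Fib).IsInvertedBy F)
    (X Y : BF Cof Fib) (f g : X ⟶ Y) (hfg : homotopyRel Cof Fib f g) :
    F.map f = F.map g := by
  obtain ⟨P, k, k0, k1⟩ : ∃ P : WeakPath Cof Fib Y.obj, PathHomotopic P f.hom g.hom := by
    obtain ⟨W, hW⟩ | ⟨P, hP⟩ := hfg
    · obtain ⟨P⟩ := hpath Y.obj Y.property.1 Y.property.2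
      exact ⟨P, cyl_to_path hCof hFib X.property.1 Y.property.2 W P hW⟩
    · exact ⟨P, hP⟩
  obtain ⟨hpr₀, hYY, hPth⟩ := path_facts hFib Y.property.2 P
  obtain ⟨Z, i0, q, hi0, hq, hiq⟩ := hfac₁ (initial.to P.Pth) hCof.initial_cofibrant hPth
  have hZc : Cofibrant Cof Z := by
    show Cof (initial.to Z)
    rw [initial.hom_ext (initial.to Z) i0]; exact hi0
  have hZf : Fibrant Fib Z := fibrant_comp hFib q hPth hq.1
  haveI := hq.2 (initial.to X.obj) X.property.1 hCof.initial_cofibrant X.property.1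
  have sq1 : CommSq (initial.to Z) (initial.to X.obj) q k := ⟨initial.hom_ext _ _⟩
  have hT : Fibrant Fib P.T := fibrant_comp hFib P.e Y.property.2 P.e_acyclic.1
  obtain ⟨T', i1, m, hi1, hm, him⟩ := hfac₁ (initial.to P.T) hCof.initial_cofibrant hT
  have hT'c : Cofibrant Cof T' := by
    show Cof (initial.to T')
    rw [initial.hom_ext (initial.to T') i1]; exact hi1
  have hT'f : Fibrant Fib T' := fibrant_comp hFib m hT hm.1
  haveI := hq.2 (initial.to T') hT'c hCof.initial_cofibrant hT'c
  have sq2 : CommSq (initial.to Z) (initial.to T') q (m ≫ P.σ) := ⟨initial.hom_ext _ _⟩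
  let Zb : BF Cof Fib := ⟨Z, hZc, hZf⟩
  let T'b : BF Cof Fib := ⟨T', hT'c, hT'f⟩
  let p₀ : Zb ⟶ Y := ObjectProperty.homMk <| q ≫ P.π ≫ P.pr₀
  let p₁ : Zb ⟶ Y := ObjectProperty.homMk <| q ≫ P.π ≫ P.pr₁
  let s : T'b ⟶ Zb := ObjectProperty.homMk <| sq2.lift
  let ht : X ⟶ Zb := ObjectProperty.homMk <| sq1.lift
  let e'' : T'b ⟶ Y := ObjectProperty.homMk <| m ≫ P.e
  have hp₀ : bfAcyclicFib Cof Fib p₀ := by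
    show IsAcyclicFib Cof Fib (q ≫ P.π ≫ P.pr₀)
    exact IsAcyclicFib.comp' hFib hq P.π_pr₀_acyclic
  have he'' : bfAcyclicFib Cof Fib e'' := IsAcyclicFib.comp' hFib hm P.e_acyclic
  have hs0 : s ≫ p₀ = e'' := by
    ext
    show sq2.lift ≫ q ≫ P.π ≫ P.pr₀ = m ≫ P.e
    rw [reassoc_of% sq2.fac_right, P.fac₀]
  have hs1 : s ≫ p₁ = e'' := by
    ext
    show sq2.lift ≫ q ≫ P.π ≫ P.pr₁ = m ≫ P.e
    rw [reassoc_of% sq2.fac_right, P.fac₁]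
  have hf0 : ht ≫ p₀ = f := by
    ext
    show sq1.lift ≫ q ≫ P.π ≫ P.pr₀ = f.hom
    rw [reassoc_of% sq1.fac_right]; exact k0
  have hf1 : ht ≫ p₁ = g := by
    ext
    show sq1.lift ≫ q ≫ P.π ≫ P.pr₁ = g.hom
    rw [reassoc_of% sq1.fac_right]; exact k1
  haveI := hF p₀ hp₀
  haveI := hF e'' he''
  have h2 : F.map s ≫ F.map p₀ = F.map e'' := by rw [← F.map_comp, hs0]
  have h3 : F.map s ≫ F.map p₁ = F.map e'' := by rw [← F.map_comp, hs1]
  haveI : IsIso (F.map s ≫ F.map p₀) := by rw [h2]; infer_instance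
  haveI := IsIso.of_isIso_comp_right (F.map s) (F.map p₀)
  have hp : F.map p₀ = F.map p₁ := by
    rw [← cancel_epi (F.map s), h2, h3]
  calc F.map f = F.map (ht ≫ p₀) := by rw [hf0]
    _ = F.map ht ≫ F.map p₀ := F.map_comp _ _
    _ = F.map ht ≫ F.map p₁ := by rw [hp]
    _ = F.map (ht ≫ p₁) := (F.map_comp _ _).symm
    _ = F.map g := by rw [hf1]

end Main

/-- The strict universal property of a quotient functor as a localization. -/
def quotientStrictUP {C' : Type*} [Category C'] (r : HomRel C') (Wp : MorphismProperty C')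
    (D : Type*) [Category D]
    (hinv : Wp.IsInvertedBy (Quotient.functor r))
    (hcomp : ∀ (F : C' ⥤ D), Wp.IsInvertedBy F →
      ∀ (X Y : C') (f g : X ⟶ Y), r f g → F.map f = F.map g) :
    Localization.StrictUniversalPropertyFixedTarget (Quotient.functor r) Wp D where
  inverts := hinv
  lift F hF := CategoryTheory.Quotient.lift r F (hcomp F hF)
  fac F hF := CategoryTheory.Quotient.lift_spec r F _
  uniq F₁ F₂ h := CategoryTheory.Quotient.lift_unique' r F₁ F₂ h

/-- the quotient functor from the category of bifibrant objects to its
quotient by the homotopy relation sends acyclic cofibrations to isomorphisms and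
exhibits the quotient as the localization at the acyclic cofibrations, and dually as
the localization at the acyclic fibrations. -/
theorem statement3 (Cof Fib : MorphismProperty C)
    (hCof : IsCofClass Cof) (hFib : IsFibClass Fib)
    (hfac₁ : ∀ {X Y : C} (f : X ⟶ Y), Cofibrant Cof X → Fibrant Fib Y →
      ∃ (Z : C) (i : X ⟶ Z) (q : Z ⟶ Y), Cof i ∧ IsAcyclicFib Cof Fib q ∧ i ≫ q = f)
    (hfac₂ : ∀ {X Y : C} (f : X ⟶ Y), Cofibrant Cof X → Fibrant Fib Y →
      ∃ (Z : C) (i : X ⟶ Z) (q : Z ⟶ Y), IsAcyclicCof Cof Fib i ∧ Fib q ∧ i ≫ q = f)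
    (hcyl : ∀ X : C, Cofibrant Cof X → Fibrant Fib X → Nonempty (WeakCylinder Cof Fib X))
    (hpath : ∀ X : C, Cofibrant Cof X → Fibrant Fib X → Nonempty (WeakPath Cof Fib X)) :
    (∀ {X Y : BF Cof Fib} (f : X ⟶ Y), bfAcyclicCof Cof Fib f →
      IsIso ((Quotient.functor (homotopyRel Cof Fib)).map f)) ∧
    (Quotient.functor (homotopyRel Cof Fib)).IsLocalization (bfAcyclicCof Cof Fib) ∧
    (Quotient.functor (homotopyRel Cof Fib)).IsLocalization (bfAcyclicFib Cof Fib) := by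
  have hinvC := Q_inverts_cof hCof hFib hpath
  have hinvF := Q_inverts_fib hCof hFib hcyl
  refine ⟨fun f hf => hinvC f hf, ?_, ?_⟩
  · exact Functor.IsLocalization.mk' _ _
      (quotientStrictUP _ _ _ hinvC
        (fun F hF X Y f g h => compat_cof hCof hFib hfac₂ hcyl F hF X Y f g h))
      (quotientStrictUP _ _ _ hinvC
        (fun F hF X Y f g h => compat_cof hCof hFib hfac₂ hcyl F hF X Y f g h))
  · exact Functor.IsLocalization.mk' _ _
      (quotientStrictUP _ _ _ hinvF
        (fun F hF X Y f g h => compat_fib hCof hFib hfac₁ hpath F hF X Y f g h))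
      (quotientStrictUP _ _ _ hinvF
        (fun F hF X Y f g h => compat_fib hCof hFib hfac₁ hpath F hF X Y f g h))

end WMC
end

section
/- Let C be a category, D ⊆ C a full subcategory, W a class of morphisms of C which is stable under composition, and W' a class of morphisms of D. Assume: (a) for every object c of C there is a morphism w : c → d in W with d in D; (b) for every morphism w : c → d in W with d in D, and every morphism c → d' with d' in D, there is a morphism d → d' making the triangle commute; (c) any two morphisms d → d' making such a triangle commute are identified by the localization functor D → D[W'⁻¹]. Then the functor D[W'⁻¹] → C[(W ∪ W')⁻¹] induced by the inclusion D ⊆ C is an equivalence of categories, where W' is viewed as a class of morphisms of C via the inclusion. -/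
open CategoryTheory CategoryTheory.Limits

universe v u

namespace LocExt

variable {C : Type u} [Category.{v} C]

/-- The union `W ∪ W'` of a class of morphisms of `C` and a class of morphisms of the
full subcategory on `P`, viewed as a class of morphisms of `C`. -/
def unionClass (P : C → Prop) (W : MorphismProperty C)
    (W' : MorphismProperty (ObjectProperty.FullSubcategory P)) : MorphismProperty C :=
  fun X Y f => W f ∨ ∃ (hX : P X) (hY : P Y),
    W' (ObjectProperty.homMk (X := (⟨X, hX⟩ : ObjectProperty.FullSubcategory P))
      (Y := (⟨Y, hY⟩ : ObjectProperty.FullSubcategory P)) f)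

/-- under conditions (a), (b), (c), the composite
`D = FullSubcategory P ⥤ C ⥤ C[(W ∪ W')⁻¹]` is a localization of `D` at `W'`;
equivalently, the induced functor `D[W'⁻¹] ⥤ C[(W ∪ W')⁻¹]` is an equivalence. -/
theorem statement4 (P : C → Prop) (W : MorphismProperty C)
    (W' : MorphismProperty (ObjectProperty.FullSubcategory P))
    (hWcomp : ∀ {X Y Z : C} (f : X ⟶ Y) (g : Y ⟶ Z), W f → W g → W (f ≫ g))
    (ha : ∀ c : C, ∃ (d : C) (_ : P d) (w : c ⟶ d), W w)
    (hb : ∀ {c : C} {d d' : ObjectProperty.FullSubcategory P} (w : c ⟶ d.obj), W w → ∀ (f : c ⟶ d'.obj),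
      ∃ g : d ⟶ d', w ≫ (ObjectProperty.ι P).map g = f)
    (hc : ∀ {c : C} {d d' : ObjectProperty.FullSubcategory P} (w : c ⟶ d.obj), W w → ∀ (f : c ⟶ d'.obj)
      (g₁ g₂ : d ⟶ d'), w ≫ (ObjectProperty.ι P).map g₁ = f →
      w ≫ (ObjectProperty.ι P).map g₂ = f →
      W'.Q.map g₁ = W'.Q.map g₂) :
    (ObjectProperty.ι P ⋙ (unionClass P W W').Q).IsLocalization W' := by
  classical
  choose d hd w hw using ha
  let ι := ObjectProperty.ι P
  let U := unionClass P W W'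
  let Lu := U.Q
  let Dc : C → ObjectProperty.FullSubcategory P := fun c => ⟨d c, hd c⟩
  -- choice of lifts of morphisms
  have hlift : ∀ {c c' : C} (f : c ⟶ c'), ∃ g : Dc c ⟶ Dc c',
      w c ≫ ι.map g = f ≫ w c' := fun {c c'} f => hb (d := Dc c) (d' := Dc c') (w c) (hw c) (f ≫ w c')
  let g : ∀ {c c' : C}, (c ⟶ c') → (Dc c ⟶ Dc c') := fun f => (hlift f).choose
  have hg : ∀ {c c' : C} (f : c ⟶ c'), w c ≫ ι.map (g f) = f ≫ w c' :=
    fun f => (hlift f).choose_spec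
  -- the reflection functor `R : C ⥤ D[W'⁻¹]`
  let R : C ⥤ W'.Localization :=
    { obj := fun c => W'.Q.obj (Dc c)
      map := fun f => W'.Q.map (g f)
      map_id := fun c => by
        rw [← W'.Q.map_id]
        refine hc (w c) (hw c) (w c) _ _ ?_ ?_
        · rw [hg (𝟙 c)]; exact Category.id_comp _
        · rw [ι.map_id]; exact Category.comp_id _
      map_comp := fun {X Y Z} f f' => by
        rw [← W'.Q.map_comp]
        refine hc (w X) (hw X) (f ≫ f' ≫ w Z) _ _ ?_ ?_
        · rw [hg (f ≫ f'), Category.assoc]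
        · rw [ι.map_comp, ← Category.assoc, hg f, Category.assoc, hg f'] }
  -- morphisms of `D` whose image in `C` is in `W` become isos in `D[W'⁻¹]`
  have unitIso : ∀ (e d0 : ObjectProperty.FullSubcategory P) (u : e ⟶ d0), W (ι.map u) →
      IsIso (W'.Q.map u) := by
    intro e d0 u hu
    obtain ⟨h, hh⟩ := hb (ι.map u) hu (𝟙 e.obj)
    have h1 : u ≫ h = 𝟙 e := ObjectProperty.hom_ext _ (by simpa [ι] using hh)
    have h2 : W'.Q.map (h ≫ u) = W'.Q.map (𝟙 d0) := by
      refine hc (ι.map u) hu (ι.map u) _ _ ?_ ?_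
      · rw [ι.map_comp, ← Category.assoc, hh]; exact Category.id_comp _
      · rw [ι.map_id]; exact Category.comp_id _
    exact ⟨W'.Q.map h, by rw [← W'.Q.map_comp, h1, W'.Q.map_id],
      by rw [← W'.Q.map_comp, h2, W'.Q.map_id]⟩
  -- relative version
  have liftIso : ∀ {c : C} {d0 d1 : ObjectProperty.FullSubcategory P} (w0 : c ⟶ d0.obj) (g0 : d0 ⟶ d1),
      W w0 → W (w0 ≫ ι.map g0) → IsIso (W'.Q.map g0) := by
    intro c d0 d1 w0 g0 hw0 hwg
    obtain ⟨h, hh⟩ := hb (w0 ≫ ι.map g0) hwg w0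
    have h1 : W'.Q.map (g0 ≫ h) = W'.Q.map (𝟙 d0) := by
      refine hc w0 hw0 w0 _ _ ?_ ?_
      · rw [ι.map_comp, ← Category.assoc]; exact hh
      · rw [ι.map_id]; exact Category.comp_id _
    have h2 : W'.Q.map (h ≫ g0) = W'.Q.map (𝟙 d1) := by
      refine hc (w0 ≫ ι.map g0) hwg (w0 ≫ ι.map g0) _ _ ?_ ?_
      · rw [ι.map_comp, ← Category.assoc, hh]
      · rw [ι.map_id]; exact Category.comp_id _
    exact ⟨W'.Q.map h, by rw [← W'.Q.map_comp, h1, W'.Q.map_id],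
      by rw [← W'.Q.map_comp, h2, W'.Q.map_id]⟩
  -- `R` inverts the union
  have hR : U.IsInvertedBy R := by
    rintro X Y f (hf | ⟨hX, hY, hf⟩)
    · exact liftIso (w X) (g f) (hw X) (by rw [hg f]; exact hWcomp f (w Y) hf (hw Y))
    · show IsIso (W'.Q.map (g f))
      haveI h1 := unitIso ⟨X, hX⟩ (Dc X) (ObjectProperty.homMk (w X)) (hw X)
      haveI h2 := unitIso ⟨Y, hY⟩ (Dc Y) (ObjectProperty.homMk (w Y)) (hw Y)
      haveI h3 : IsIso (W'.Q.map
          (ObjectProperty.homMk (X := (⟨X, hX⟩ : ObjectProperty.FullSubcategory P)) (Y := (⟨Y, hY⟩ : ObjectProperty.FullSubcategory P)) (f))) :=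
        Localization.inverts W'.Q W' _ hf
      have key : (ObjectProperty.homMk (X := (⟨X, hX⟩ : ObjectProperty.FullSubcategory P)) (Y := (⟨Y, hY⟩ : ObjectProperty.FullSubcategory P)) (f)) ≫
          (ObjectProperty.homMk (X := (⟨Y, hY⟩ : ObjectProperty.FullSubcategory P)) (Y := Dc Y) (w Y)) =
          (ObjectProperty.homMk (X := (⟨X, hX⟩ : ObjectProperty.FullSubcategory P)) (Y := Dc X) (w X)) ≫ g f :=
        ι.map_injective (hg f).symm
      have : W'.Q.map (g f) =
          inv (W'.Q.map (ObjectProperty.homMk (X := (⟨X, hX⟩ : ObjectProperty.FullSubcategory P)) (Y := Dc X) (w X))) ≫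
          W'.Q.map (ObjectProperty.homMk (X := (⟨X, hX⟩ : ObjectProperty.FullSubcategory P)) (Y := (⟨Y, hY⟩ : ObjectProperty.FullSubcategory P)) (f)) ≫
          W'.Q.map (ObjectProperty.homMk (X := (⟨Y, hY⟩ : ObjectProperty.FullSubcategory P)) (Y := Dc Y) (w Y)) := by
        rw [← W'.Q.map_comp, key, W'.Q.map_comp, IsIso.inv_hom_id_assoc]
      rw [this]
      infer_instance
  -- the inclusion composed with the localization of `C` inverts `W'`
  have hF : W'.IsInvertedBy (ι ⋙ Lu) := fun d0 d1 f hf =>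
    Localization.inverts Lu U (ι.map f) (Or.inr ⟨d0.2, d1.2, hf⟩)
  let Φ : W'.Localization ⥤ U.Localization := Localization.lift (ι ⋙ Lu) hF W'.Q
  let Ψ : U.Localization ⥤ W'.Localization := Localization.lift R hR Lu
  let κ : W'.Q ⋙ Φ ≅ ι ⋙ Lu := Localization.fac (ι ⋙ Lu) hF W'.Q
  let κ' : Lu ⋙ Ψ ≅ R := Localization.fac R hR Lu
  -- the unit isomorphism `W'.Q ≅ ι ⋙ R`
  haveI hu : ∀ (d0 : ObjectProperty.FullSubcategory P),
      IsIso (W'.Q.map (ObjectProperty.homMk (X := d0) (Y := Dc d0.obj) (w d0.obj))) := fun d0 =>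
    unitIso d0 (Dc d0.obj) _ (hw d0.obj)
  let e : W'.Q ≅ ι ⋙ R := NatIso.ofComponents
    (fun d0 => @asIso _ _ _ _ _ (hu d0))
    (fun {d0 d1} f => by
      have key : f ≫ (ObjectProperty.homMk (X := d1) (Y := Dc d1.obj) (w d1.obj)) =
          (ObjectProperty.homMk (X := d0) (Y := Dc d0.obj) (w d0.obj)) ≫ g (ι.map f) :=
        ι.map_injective (hg (ι.map f)).symm
      dsimp [R]
      rw [← W'.Q.map_comp, ← W'.Q.map_comp]
      exact congrArg W'.Q.map key)
  -- the counit isomorphism `R ⋙ Φ ≅ Lu`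
  haveI hLuw : ∀ c : C, IsIso (Lu.map (w c)) := fun c =>
    Localization.inverts Lu U (w c) (Or.inl (hw c))
  let e2 : R ⋙ Φ ≅ Lu := NatIso.ofComponents
    (fun c => κ.app (Dc c) ≪≫ (asIso (Lu.map (w c))).symm)
    (fun {c c'} f => by
      dsimp [R]
      have n := κ.hom.naturality (g f)
      dsimp at n
      rw [← Category.assoc, n, Category.assoc, Category.assoc]
      congr 1
      have comm : Lu.map (w c) ≫ Lu.map (ι.map (g f)) = Lu.map f ≫ Lu.map (w c') := by
        rw [← Lu.map_comp, ← Lu.map_comp, hg f]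
      rw [IsIso.eq_inv_comp, ← Category.assoc, comm, Category.assoc,
        IsIso.hom_inv_id, Category.comp_id])
  -- assemble the equivalence and conclude
  haveI lift1 : Localization.Lifting W'.Q W' (ι ⋙ R) (Φ ⋙ Ψ) :=
    ⟨(Functor.associator _ _ _).symm ≪≫ Functor.isoWhiskerRight κ Ψ ≪≫
      Functor.associator _ _ _ ≪≫ Functor.isoWhiskerLeft ι κ'⟩
  haveI lift2 : Localization.Lifting Lu U (R ⋙ Φ) (Ψ ⋙ Φ) :=
    ⟨(Functor.associator _ _ _).symm ≪≫ Functor.isoWhiskerRight κ' Φ⟩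
  let η : 𝟭 W'.Localization ≅ Φ ⋙ Ψ :=
    Localization.liftNatIso W'.Q W' W'.Q (ι ⋙ R) (𝟭 _) (Φ ⋙ Ψ) e
  let ε : Ψ ⋙ Φ ≅ 𝟭 U.Localization :=
    Localization.liftNatIso Lu U (R ⋙ Φ) Lu (Ψ ⋙ Φ) (𝟭 _) e2
  exact Functor.IsLocalization.of_equivalence_target W'.Q W' (ι ⋙ Lu)
    (CategoryTheory.Equivalence.mk Φ Ψ η ε) κ

end LocExt
end

section
/- Let C be a weak model category. Given a commutative square with left leg a cofibration i : A → B between cofibrant objects, right leg an equivalence f : X → Y between fibrant objects, top w : A → X and bottom b : B → Y (so f ∘ w = b ∘ i), there exists a morphism t : B → X with t ∘ i = w (the lower triangle is not required to commute). -/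
open CategoryTheory CategoryTheory.Limits

universe w v u

namespace WMC

variable {C : Type u} [Category.{v} C]

variable [HasInitial C] [HasTerminal C]

/-- A relative strong cylinder object for a cofibration `i : A ⟶ B`: a factorization
`B ⊔_A B ⟶ I_A B ⟶ B` of the codiagonal, with the first map a cofibration whose
precomposition with the first coprojection is an acyclic cofibration. -/
structure RelStrongCylinder (Cof Fib : MorphismProperty C) {A B : C} (i : A ⟶ B) where
  BB : C
  in₀ : B ⟶ BB
  in₁ : B ⟶ BB
  isPushout : IsPushout i i in₀ in₁
  Cyl : C
  ι : BB ⟶ Cyl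
  ρ : Cyl ⟶ B
  ι_cof : Cof ι
  in₀_ι_acyclic : IsAcyclicCof Cof Fib (in₀ ≫ ι)
  fac₀ : in₀ ≫ ι ≫ ρ = 𝟙 B
  fac₁ : in₁ ≫ ι ≫ ρ = 𝟙 B

/-- A relative strong path object for a fibration `q : Y ⟶ X`: a factorization
`Y ⟶ P_X Y ⟶ Y ×_X Y` of the relative diagonal, with the second map a fibration whose
postcomposition with the first projection is an acyclic fibration. -/
structure RelStrongPath (Cof Fib : MorphismProperty C) {X Y : C} (q : Y ⟶ X) where
  YY : C
  pr₀ : YY ⟶ Y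
  pr₁ : YY ⟶ Y
  isPullback : IsPullback pr₀ pr₁ q q
  Pth : C
  π : Pth ⟶ YY
  σ : Y ⟶ Pth
  π_fib : Fib π
  π_pr₀_acyclic : IsAcyclicFib Cof Fib (π ≫ pr₀)
  fac₀ : σ ≫ π ≫ pr₀ = 𝟙 Y
  fac₁ : σ ≫ π ≫ pr₁ = 𝟙 Y

/-- A weak model category: a class of cofibrations and a class of fibrations satisfying
the factorization axiom, the cylinder axiom and the path object axiom. -/
structure IsWeakModel (Cof Fib : MorphismProperty C) : Prop where
  cofClass : IsCofClass Cof
  fibClass : IsFibClass Fib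
  factor_cof_afib : ∀ {X Y : C} (f : X ⟶ Y), Cofibrant Cof X → Fibrant Fib Y →
    ∃ (Z : C) (i : X ⟶ Z) (q : Z ⟶ Y), Cof i ∧ IsAcyclicFib Cof Fib q ∧ i ≫ q = f
  factor_acof_fib : ∀ {X Y : C} (f : X ⟶ Y), Cofibrant Cof X → Fibrant Fib Y →
    ∃ (Z : C) (i : X ⟶ Z) (q : Z ⟶ Y), IsAcyclicCof Cof Fib i ∧ Fib q ∧ i ≫ q = f
  cylinder : ∀ {A B : C} (i : A ⟶ B), Cof i → Cofibrant Cof A → Fibrant Fib B →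
    Nonempty (RelStrongCylinder Cof Fib i)
  pathObj : ∀ {X Y : C} (q : Y ⟶ X), Fib q → Cofibrant Cof Y → Fibrant Fib X →
    Nonempty (RelStrongPath Cof Fib q)

/-- The full subcategory of objects that are cofibrant or fibrant. -/
abbrev Ccf (Cof Fib : MorphismProperty C) : Type u :=
  ObjectProperty.FullSubcategory (fun X : C => Cofibrant Cof X ∨ Fibrant Fib X)

/-- The class of morphisms of `C^{c∪f}` consisting of the acyclic cofibrations with
cofibrant domain and the acyclic fibrations with fibrant target. -/
def WcfProp (Cof Fib : MorphismProperty C) : MorphismProperty (Ccf Cof Fib) :=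
  fun X Y f =>
    (IsAcyclicCof Cof Fib ((ObjectProperty.ι _).map f) ∧ Cofibrant Cof X.obj) ∨
    (IsAcyclicFib Cof Fib ((ObjectProperty.ι _).map f) ∧ Fibrant Fib Y.obj)

/-- A morphism of `C` between fibrant-or-cofibrant objects, seen in `C^{c∪f}`. -/
def homCcf (Cof Fib : MorphismProperty C) {X Y : C}
    (hX : Cofibrant Cof X ∨ Fibrant Fib X) (hY : Cofibrant Cof Y ∨ Fibrant Fib Y)
    (f : X ⟶ Y) : (⟨X, hX⟩ : Ccf Cof Fib) ⟶ (⟨Y, hY⟩ : Ccf Cof Fib) := ObjectProperty.homMk f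

/-- A morphism of `C^{c∪f}` is an equivalence if it becomes invertible in the localization
of `C^{c∪f}` at the acyclic cofibrations with cofibrant domain and the acyclic fibrations
with fibrant target. -/
def IsEquivCcf (Cof Fib : MorphismProperty C) {X Y : Ccf Cof Fib} (f : X ⟶ Y) : Prop :=
  IsIso ((WcfProp Cof Fib).Q.map f)

section Dev
set_option linter.unusedSectionVars false
variable {C : Type u} [Category.{v} C] [HasInitial C] [HasTerminal C]
variable {Cof Fib : MorphismProperty C}

/-- Extract a lift from a lifting property and a commuting square. -/
lemma getLift {A B X Y : C} {i : A ⟶ B} {p : X ⟶ Y}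
    (h : HasLiftingProperty i p) {f : A ⟶ X} {g : B ⟶ Y} (w : f ≫ p = i ≫ g) :
    ∃ l : B ⟶ X, i ≫ l = f ∧ l ≫ p = g := by
  obtain ⟨l⟩ := (h.sq_hasLift ⟨w⟩).exists_lift
  exact ⟨l.l, l.fac_left, l.fac_right⟩

lemma cofibrant_of_cof (hWM : IsWeakModel Cof Fib) {X Y : C} {j : X ⟶ Y}
    (hj : Cof j) (hX : Cofibrant Cof X) : Cofibrant Cof Y := by
  show Cof (initial.to Y)
  rw [show initial.to Y = initial.to X ≫ j from initial.hom_ext _ _]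
  exact hWM.cofClass.comp_mem _ _ hX hj

lemma fibrant_of_fib (hWM : IsWeakModel Cof Fib) {X Y : C} {p : X ⟶ Y}
    (hp : Fib p) (hY : Fibrant Fib Y) : Fibrant Fib X := by
  show Fib (terminal.from X)
  rw [show terminal.from X = p ≫ terminal.from Y from terminal.hom_ext _ _]
  exact hWM.fibClass.comp_mem _ _ hp hY

lemma acCof_comp (hWM : IsWeakModel Cof Fib) {X Y Z : C} {f : X ⟶ Y} {g : Y ⟶ Z}
    (hf : IsAcyclicCof Cof Fib f) (hg : IsAcyclicCof Cof Fib g) :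
    IsAcyclicCof Cof Fib (f ≫ g) := by
  refine ⟨hWM.cofClass.comp_mem _ _ hf.1 hg.1, fun p hp h1 h2 => ?_⟩
  constructor
  intro u v sq
  obtain ⟨l₁, hl₁, hl₁'⟩ := getLift (hf.2 p hp h1 h2) (f := u) (g := g ≫ v)
    (by rw [sq.w, Category.assoc])
  obtain ⟨l₂, hl₂, hl₂'⟩ := getLift (hg.2 p hp h1 h2) (f := l₁) (g := v) hl₁'
  exact ⟨⟨⟨l₂, by rw [Category.assoc, hl₂, hl₁], hl₂'⟩⟩⟩

lemma acFib_comp (hWM : IsWeakModel Cof Fib) {X Y Z : C} {f : X ⟶ Y} {g : Y ⟶ Z}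
    (hf : IsAcyclicFib Cof Fib f) (hg : IsAcyclicFib Cof Fib g) :
    IsAcyclicFib Cof Fib (f ≫ g) := by
  refine ⟨hWM.fibClass.comp_mem _ _ hf.1 hg.1, fun i hi h1 h2 => ?_⟩
  constructor
  intro u v sq
  obtain ⟨l₁, hl₁, hl₁'⟩ := getLift (hg.2 i hi h1 h2) (f := u ≫ f) (g := v)
    (by rw [Category.assoc, ← sq.w])
  obtain ⟨l₂, hl₂, hl₂'⟩ := getLift (hf.2 i hi h1 h2) (f := u) (g := l₁) hl₁.symm
  exact ⟨⟨⟨l₂, hl₂, by rw [← Category.assoc, hl₂', hl₁']⟩⟩⟩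

lemma cof_of_pushout (hWM : IsWeakModel Cof Fib) {A X Y P : C} {f : A ⟶ X} {j : A ⟶ Y}
    {inl : X ⟶ P} {inr : Y ⟶ P} (hpo : IsPushout f j inl inr)
    (hj : Cof j) (hA : Cofibrant Cof A) (hX : Cofibrant Cof X) : Cof inl := by
  obtain ⟨P', inl', inr', hpo', hcof'⟩ := hWM.cofClass.pushout_mem j f hj hA hX
  have he1 : inl' ≫ hpo'.desc inl inr hpo.w = inl := hpo'.inl_desc _ _ _
  have hiso : IsIso (hpo'.desc inl inr hpo.w) := by
    refine ⟨hpo.desc inl' inr' hpo'.w, ?_, ?_⟩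
    · apply hpo'.hom_ext <;>
        simp [reassoc_of% hpo'.inl_desc inl inr hpo.w,
          reassoc_of% hpo'.inr_desc inl inr hpo.w]
    · apply hpo.hom_ext <;>
        simp [reassoc_of% hpo.inl_desc inl' inr' hpo'.w,
          reassoc_of% hpo.inr_desc inl' inr' hpo'.w]
  have hP' : Cofibrant Cof P' := cofibrant_of_cof hWM hcof' hX
  rw [← he1]
  exact hWM.cofClass.comp_mem _ _ hcof' (hWM.cofClass.iso_mem _ hiso hP')

lemma fib_of_pullback (hWM : IsWeakModel Cof Fib) {A X Y P : C} {f : X ⟶ A} {p : Y ⟶ A}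
    {fst : P ⟶ X} {snd : P ⟶ Y} (hpb : IsPullback fst snd f p)
    (hp : Fib p) (hA : Fibrant Fib A) (hX : Fibrant Fib X) : Fib fst := by
  obtain ⟨P', fst', snd', hpb', hfib'⟩ := hWM.fibClass.pullback_mem p f hp hA hX
  have he1 : hpb.lift fst' snd' hpb'.w ≫ fst = fst' := hpb.lift_fst _ _ _
  have hiso : IsIso (hpb'.lift fst snd hpb.w) := by
    refine ⟨hpb.lift fst' snd' hpb'.w, ?_, ?_⟩
    · exact hpb.hom_ext (by simp) (by simp)
    · exact hpb'.hom_ext (by simp) (by simp)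
  have hP' : Fibrant Fib P' := fibrant_of_fib hWM hfib' hX
  rw [show fst = hpb'.lift fst snd hpb.w ≫ fst' by simp]
  exact hWM.fibClass.comp_mem _ _ (hWM.fibClass.iso_mem _ hiso hP') hfib'

lemma llp_of_pushout {A X Y P : C} {f : A ⟶ X} {j : A ⟶ Y}
    {inl : X ⟶ P} {inr : Y ⟶ P} (hpo : IsPushout f j inl inr)
    {E F : C} {p : E ⟶ F} (h : HasLiftingProperty j p) : HasLiftingProperty inl p := by
  constructor
  intro u v sq
  obtain ⟨l, hl1, hl2⟩ := getLift h (f := f ≫ u) (g := inr ≫ v)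
    (by rw [Category.assoc, sq.w, ← Category.assoc, ← Category.assoc, hpo.w])
  refine ⟨⟨⟨hpo.desc u l hl1.symm, hpo.inl_desc _ _ _, ?_⟩⟩⟩
  apply hpo.hom_ext
  · rw [reassoc_of% hpo.inl_desc u l hl1.symm, sq.w]
  · rw [reassoc_of% hpo.inr_desc u l hl1.symm, hl2]

lemma acCof_of_pushout (hWM : IsWeakModel Cof Fib) {A X Y P : C} {f : A ⟶ X} {j : A ⟶ Y}
    {inl : X ⟶ P} {inr : Y ⟶ P} (hpo : IsPushout f j inl inr)
    (hj : IsAcyclicCof Cof Fib j) (hA : Cofibrant Cof A) (hX : Cofibrant Cof X) :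
    IsAcyclicCof Cof Fib inl :=
  ⟨cof_of_pushout hWM hpo hj.1 hA hX, fun p hp h1 h2 => llp_of_pushout hpo (hj.2 p hp h1 h2)⟩

end Dev
section Dev2
set_option linter.unusedSectionVars false
set_option maxHeartbeats 1000000
variable {C : Type u} [Category.{v} C] [HasInitial C] [HasTerminal C]
variable {Cof Fib : MorphismProperty C}

/-- Elementary right homotopy, via some strong path object on the target. -/
def PElem (Cof Fib : MorphismProperty C) {S V : C} (g h : S ⟶ V) : Prop :=
  ∃ Pa : RelStrongPath Cof Fib (terminal.from V), ∃ K : S ⟶ Pa.Pth,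
    K ≫ Pa.π ≫ Pa.pr₀ = g ∧ K ≫ Pa.π ≫ Pa.pr₁ = h

/-- Elementary left homotopy, via some strong cylinder object on the source. -/
def CElem (Cof Fib : MorphismProperty C) {S V : C} (g h : S ⟶ V) : Prop :=
  ∃ 𝒞 : RelStrongCylinder Cof Fib (initial.to S), ∃ H : 𝒞.Cyl ⟶ V,
    𝒞.in₀ ≫ 𝒞.ι ≫ H = g ∧ 𝒞.in₁ ≫ 𝒞.ι ≫ H = h

/-- The homotopy relation: equivalence closure of elementary right homotopy. -/
def Htp (Cof Fib : MorphismProperty C) {S V : C} (g h : S ⟶ V) : Prop :=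
  Relation.EqvGen (PElem Cof Fib) g h

lemma exists_path (hWM : IsWeakModel Cof Fib) {V : C} (hc : Cofibrant Cof V)
    (hf : Fibrant Fib V) : Nonempty (RelStrongPath Cof Fib (terminal.from V)) :=
  hWM.pathObj _ hf hc hWM.fibClass.terminal_fibrant

lemma exists_cyl (hWM : IsWeakModel Cof Fib) {U : C} (hc : Cofibrant Cof U)
    (hf : Fibrant Fib U) : Nonempty (RelStrongCylinder Cof Fib (initial.to U)) :=
  hWM.cylinder _ hc hWM.cofClass.initial_cofibrant hf

lemma path_pr₀_fib (hWM : IsWeakModel Cof Fib) {V : C} (hVf : Fibrant Fib V)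
    (Pa : RelStrongPath Cof Fib (terminal.from V)) : Fib Pa.pr₀ :=
  fib_of_pullback hWM Pa.isPullback hVf hWM.fibClass.terminal_fibrant hVf

lemma path_yy_fibrant (hWM : IsWeakModel Cof Fib) {V : C} (hVf : Fibrant Fib V)
    (Pa : RelStrongPath Cof Fib (terminal.from V)) : Fibrant Fib Pa.YY :=
  fibrant_of_fib hWM (path_pr₀_fib hWM hVf Pa) hVf

lemma path_pth_fibrant (hWM : IsWeakModel Cof Fib) {V : C} (hVf : Fibrant Fib V)
    (Pa : RelStrongPath Cof Fib (terminal.from V)) : Fibrant Fib Pa.Pth :=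
  fibrant_of_fib hWM Pa.π_fib (path_yy_fibrant hWM hVf Pa)

lemma cyl_in₀_cof (hWM : IsWeakModel Cof Fib) {U : C} (hUc : Cofibrant Cof U)
    (𝒞 : RelStrongCylinder Cof Fib (initial.to U)) : Cof 𝒞.in₀ :=
  cof_of_pushout hWM 𝒞.isPushout hUc hWM.cofClass.initial_cofibrant hUc

lemma cyl_bb_cofibrant (hWM : IsWeakModel Cof Fib) {U : C} (hUc : Cofibrant Cof U)
    (𝒞 : RelStrongCylinder Cof Fib (initial.to U)) : Cofibrant Cof 𝒞.BB :=
  cofibrant_of_cof hWM (cyl_in₀_cof hWM hUc 𝒞) hUc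

lemma cyl_cyl_cofibrant (hWM : IsWeakModel Cof Fib) {U : C} (hUc : Cofibrant Cof U)
    (𝒞 : RelStrongCylinder Cof Fib (initial.to U)) : Cofibrant Cof 𝒞.Cyl :=
  cofibrant_of_cof hWM 𝒞.in₀_ι_acyclic.1 hUc

lemma pelem_refl (hWM : IsWeakModel Cof Fib) {S V : C} (hVc : Cofibrant Cof V)
    (hVf : Fibrant Fib V) (g : S ⟶ V) : PElem Cof Fib g g := by
  obtain ⟨Pa⟩ := exists_path hWM hVc hVf
  exact ⟨Pa, g ≫ Pa.σ, by simp [Pa.fac₀], by simp [Pa.fac₁]⟩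

lemma pelem_pre {S' S V : C} (e : S' ⟶ S) {g h : S ⟶ V} (hp : PElem Cof Fib g h) :
    PElem Cof Fib (e ≫ g) (e ≫ h) := by
  obtain ⟨Pa, K, k0, k1⟩ := hp
  exact ⟨Pa, e ≫ K, by simp [reassoc_of% k0, k0], by simp [reassoc_of% k1, k1]⟩

lemma celem_post {S V W : C} (k : V ⟶ W) {g h : S ⟶ V} (hc : CElem Cof Fib g h) :
    CElem Cof Fib (g ≫ k) (h ≫ k) := by
  obtain ⟨𝒞, H, h0, h1⟩ := hc
  exact ⟨𝒞, H ≫ k, by rw [← h0]; simp, by rw [← h1]; simp⟩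

lemma celem_to_pelem (hWM : IsWeakModel Cof Fib) {S V : C} (hVc : Cofibrant Cof V)
    (hVf : Fibrant Fib V) {g h : S ⟶ V} (hc : CElem Cof Fib g h) :
    PElem Cof Fib g h ∧ PElem Cof Fib h g := by
  obtain ⟨𝒞, H, h0, h1⟩ := hc
  obtain ⟨Pa⟩ := exists_path hWM hVc hVf
  have hlp := 𝒞.in₀_ι_acyclic.2 Pa.π Pa.π_fib (path_pth_fibrant hWM hVf Pa)
    (path_yy_fibrant hWM hVf Pa)
  constructor
  · have w : (g ≫ Pa.σ) ≫ Pa.π =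
        (𝒞.in₀ ≫ 𝒞.ι) ≫ Pa.isPullback.lift (𝒞.ρ ≫ g) H (terminal.hom_ext _ _) := by
      apply Pa.isPullback.hom_ext
      · simp [Pa.fac₀, reassoc_of% 𝒞.fac₀, h0]
      · simp [Pa.fac₁, h0]
    obtain ⟨L, hL1, hL2⟩ := getLift hlp w
    refine ⟨Pa, (𝒞.in₁ ≫ 𝒞.ι) ≫ L, ?_, ?_⟩
    · have := reassoc_of% hL2
      simp only [Category.assoc] at this ⊢
      rw [this, Pa.isPullback.lift_fst]
      simp [reassoc_of% 𝒞.fac₁]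
    · have := reassoc_of% hL2
      simp only [Category.assoc] at this ⊢
      rw [this, Pa.isPullback.lift_snd]
      exact h1
  · have w : (g ≫ Pa.σ) ≫ Pa.π =
        (𝒞.in₀ ≫ 𝒞.ι) ≫ Pa.isPullback.lift H (𝒞.ρ ≫ g) (terminal.hom_ext _ _) := by
      apply Pa.isPullback.hom_ext
      · simp [Pa.fac₀, h0]
      · simp [Pa.fac₁, reassoc_of% 𝒞.fac₀, h0]
    obtain ⟨L, hL1, hL2⟩ := getLift hlp w
    refine ⟨Pa, (𝒞.in₁ ≫ 𝒞.ι) ≫ L, ?_, ?_⟩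
    · have := reassoc_of% hL2
      simp only [Category.assoc] at this ⊢
      rw [this, Pa.isPullback.lift_fst]
      exact h1
    · have := reassoc_of% hL2
      simp only [Category.assoc] at this ⊢
      rw [this, Pa.isPullback.lift_snd]
      simp [reassoc_of% 𝒞.fac₁]

lemma pelem_to_celem (hWM : IsWeakModel Cof Fib) {S V : C} (hSc : Cofibrant Cof S)
    (hSf : Fibrant Fib S) {g h : S ⟶ V} (hp : PElem Cof Fib g h) :
    CElem Cof Fib g h := by
  obtain ⟨Pa, K, k0, k1⟩ := hp
  obtain ⟨𝒞⟩ := exists_cyl hWM hSc hSf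
  have hlp := Pa.π_pr₀_acyclic.2 𝒞.ι 𝒞.ι_cof (cyl_bb_cofibrant hWM hSc 𝒞)
    (cyl_cyl_cofibrant hWM hSc 𝒞)
  have w : 𝒞.isPushout.desc (g ≫ Pa.σ) K (initial.hom_ext _ _) ≫ (Pa.π ≫ Pa.pr₀) =
      𝒞.ι ≫ (𝒞.ρ ≫ g) := by
    apply 𝒞.isPushout.hom_ext
    · simp [Pa.fac₀, reassoc_of% 𝒞.fac₀]
    · simp [k0, reassoc_of% 𝒞.fac₁]
  obtain ⟨L, hL1, hL2⟩ := getLift hlp w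
  have h1 := reassoc_of% hL1
  refine ⟨𝒞, L ≫ Pa.π ≫ Pa.pr₁, ?_, ?_⟩
  · rw [h1]
    simp [Pa.fac₁]
  · rw [h1]
    simp [k1]

lemma pelem_symm (hWM : IsWeakModel Cof Fib) {S V : C} (hSc : Cofibrant Cof S)
    (hSf : Fibrant Fib S) (hVc : Cofibrant Cof V) (hVf : Fibrant Fib V)
    {g h : S ⟶ V} (hp : PElem Cof Fib g h) : PElem Cof Fib h g :=
  (celem_to_pelem hWM hVc hVf (pelem_to_celem hWM hSc hSf hp)).2

lemma htp_of_pelem {S V : C} {g h : S ⟶ V} (hp : PElem Cof Fib g h) :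
    Htp Cof Fib g h := Relation.EqvGen.rel _ _ hp

lemma htp_refl {S V : C} (g : S ⟶ V) : Htp Cof Fib g g := Relation.EqvGen.refl _

lemma htp_of_eq {S V : C} {g h : S ⟶ V} (he : g = h) : Htp Cof Fib g h := by
  subst he; exact htp_refl g

lemma htp_symm {S V : C} {g h : S ⟶ V} (hp : Htp Cof Fib g h) : Htp Cof Fib h g :=
  Relation.EqvGen.symm _ _ hp

lemma htp_trans {S V : C} {g h k : S ⟶ V} (h1 : Htp Cof Fib g h)
    (h2 : Htp Cof Fib h k) : Htp Cof Fib g k := Relation.EqvGen.trans _ _ _ h1 h2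

lemma htp_pre {S' S V : C} (e : S' ⟶ S) {g h : S ⟶ V} (hp : Htp Cof Fib g h) :
    Htp Cof Fib (e ≫ g) (e ≫ h) := by
  induction hp with
  | rel x y hxy => exact htp_of_pelem (pelem_pre e hxy)
  | refl x => exact htp_refl _
  | symm x y _ ih => exact htp_symm ih
  | trans x y z _ _ ih1 ih2 => exact htp_trans ih1 ih2

lemma htp_post (hWM : IsWeakModel Cof Fib) {S V W : C} (hSc : Cofibrant Cof S)
    (hSf : Fibrant Fib S) (hWc : Cofibrant Cof W) (hWf : Fibrant Fib W)
    (k : V ⟶ W) {g h : S ⟶ V} (hp : Htp Cof Fib g h) :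
    Htp Cof Fib (g ≫ k) (h ≫ k) := by
  induction hp with
  | rel x y hxy =>
    exact htp_of_pelem (celem_to_pelem hWM hWc hWf
      (celem_post k (pelem_to_celem hWM hSc hSf hxy))).1
  | refl x => exact htp_refl _
  | symm x y _ ih => exact htp_symm ih
  | trans x y z _ _ ih1 ih2 => exact htp_trans ih1 ih2

lemma ext_acof (hWM : IsWeakModel Cof Fib) {Z Z' T : C} {j : Z ⟶ Z'}
    (hj : IsAcyclicCof Cof Fib j) (hT : Fibrant Fib T) (g : Z ⟶ T) :
    ∃ l : Z' ⟶ T, j ≫ l = g := by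
  have hlp := hj.2 (terminal.from T) hT hT hWM.fibClass.terminal_fibrant
  obtain ⟨l, hl, -⟩ := getLift hlp (f := g) (g := terminal.from Z') (terminal.hom_ext _ _)
  exact ⟨l, hl⟩

lemma lift_afib (hWM : IsWeakModel Cof Fib) {S V T : C} {q : V ⟶ T}
    (hq : IsAcyclicFib Cof Fib q) (hS : Cofibrant Cof S) (g : S ⟶ T) :
    ∃ l : S ⟶ V, l ≫ q = g := by
  have hlp := hq.2 (initial.to S) hS hWM.cofClass.initial_cofibrant hS
  obtain ⟨l, -, hl⟩ := getLift hlp (f := initial.to V) (g := g) (initial.hom_ext _ _)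
  exact ⟨l, hl⟩

lemma pelem_ext (hWM : IsWeakModel Cof Fib) {Z P' V : C} {j : Z ⟶ P'}
    (hj : IsAcyclicCof Cof Fib j) (hVc : Cofibrant Cof V) (hVf : Fibrant Fib V)
    {k k' : Z ⟶ V} (hp : PElem Cof Fib k k') {g h : P' ⟶ V}
    (hg : j ≫ g = k) (hh : j ≫ h = k') : PElem Cof Fib g h := by
  obtain ⟨Pa, K, k0, k1⟩ := hp
  have hlp := hj.2 Pa.π Pa.π_fib (path_pth_fibrant hWM hVf Pa) (path_yy_fibrant hWM hVf Pa)
  have w : K ≫ Pa.π = j ≫ Pa.isPullback.lift g h (terminal.hom_ext _ _) := by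
    apply Pa.isPullback.hom_ext
    · simpa [k0] using hg.symm
    · simpa [k1] using hh.symm
  obtain ⟨L, -, hL2⟩ := getLift hlp w
  have h2 := reassoc_of% hL2
  exact ⟨Pa, L, by rw [h2]; simp, by rw [h2]; simp⟩

lemma htp_precomp_cancel (hWM : IsWeakModel Cof Fib) {Z P' V : C} {j : Z ⟶ P'}
    (hj : IsAcyclicCof Cof Fib j) (hVc : Cofibrant Cof V) (hVf : Fibrant Fib V)
    {g h : P' ⟶ V} (htp : Htp Cof Fib (j ≫ g) (j ≫ h)) : Htp Cof Fib g h := by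
  suffices H : ∀ k k' : Z ⟶ V, Htp Cof Fib k k' →
      ∀ g h : P' ⟶ V, j ≫ g = k → j ≫ h = k' → Htp Cof Fib g h from
    H _ _ htp g h rfl rfl
  intro k k' htp
  induction htp with
  | rel x y hxy =>
    intro g h hg hh
    exact htp_of_pelem (pelem_ext hWM hj hVc hVf hxy hg hh)
  | refl x =>
    intro g h hg hh
    exact htp_of_pelem (pelem_ext hWM hj hVc hVf (pelem_refl hWM hVc hVf x) hg hh)
  | symm x y _ ih =>
    intro g h hg hh
    exact htp_symm (ih h g hh hg)
  | trans x y z _ _ ih1 ih2 =>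
    intro g h hg hh
    obtain ⟨m, hm⟩ := ext_acof hWM hj hVf y
    exact htp_trans (ih1 g m hg hm) (ih2 m h hm hh)

lemma celem_of_eq_comp (hWM : IsWeakModel Cof Fib) {P Q T : C} {s : Q ⟶ T}
    (hs : IsAcyclicFib Cof Fib s) (hPc : Cofibrant Cof P) (hPf : Fibrant Fib P)
    {g h : P ⟶ Q} (heq : g ≫ s = h ≫ s) : CElem Cof Fib g h := by
  obtain ⟨𝒞⟩ := exists_cyl hWM hPc hPf
  have hlp := hs.2 𝒞.ι 𝒞.ι_cof (cyl_bb_cofibrant hWM hPc 𝒞) (cyl_cyl_cofibrant hWM hPc 𝒞)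
  have w : 𝒞.isPushout.desc g h (initial.hom_ext _ _) ≫ s = 𝒞.ι ≫ (𝒞.ρ ≫ g ≫ s) := by
    apply 𝒞.isPushout.hom_ext
    · simp [reassoc_of% 𝒞.fac₀]
    · simp [reassoc_of% 𝒞.fac₁, heq]
  obtain ⟨L, hL1, -⟩ := getLift hlp w
  have h1 := reassoc_of% hL1
  refine ⟨𝒞, L, ?_, ?_⟩
  · have h2 := 𝒞.isPushout.inl_desc g h (initial.hom_ext _ _)
    rw [← hL1] at h2
    simpa using h2
  · have h2 := 𝒞.isPushout.inr_desc g h (initial.hom_ext _ _)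
    rw [← hL1] at h2
    simpa using h2

lemma htp_of_eq_comp (hWM : IsWeakModel Cof Fib) {P Q T : C} {s : Q ⟶ T}
    (hs : IsAcyclicFib Cof Fib s) (hPc : Cofibrant Cof P) (hPf : Fibrant Fib P)
    (hQc : Cofibrant Cof Q) (hQf : Fibrant Fib Q)
    {g h : P ⟶ Q} (heq : g ≫ s = h ≫ s) : Htp Cof Fib g h :=
  htp_of_pelem (celem_to_pelem hWM hQc hQf (celem_of_eq_comp hWM hs hPc hPf heq)).1

lemma celem_lift {P Q T : C} {s : Q ⟶ T} (hs : IsAcyclicFib Cof Fib s)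
    (hQf : Fibrant Fib Q) (hTf : Fibrant Fib T) {k k' : P ⟶ T}
    (hc : CElem Cof Fib k k') {α : P ⟶ Q} (hα : α ≫ s = k) :
    ∃ α' : P ⟶ Q, α' ≫ s = k' ∧ CElem Cof Fib α α' := by
  obtain ⟨𝒞, H, h0, h1⟩ := hc
  have hlp := 𝒞.in₀_ι_acyclic.2 s hs.1 hQf hTf
  have w : α ≫ s = (𝒞.in₀ ≫ 𝒞.ι) ≫ H := by rw [hα, ← h0]; simp
  obtain ⟨Hh, hHh1, hHh2⟩ := getLift hlp w
  refine ⟨(𝒞.in₁ ≫ 𝒞.ι) ≫ Hh, ?_, ⟨𝒞, Hh, by simpa using hHh1, by simp⟩⟩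
  rw [Category.assoc, Category.assoc, hHh2, ← Category.assoc, ← h1, Category.assoc]

lemma htp_postcomp_cancel (hWM : IsWeakModel Cof Fib) {P Q T : C} {s : Q ⟶ T}
    (hs : IsAcyclicFib Cof Fib s) (hPc : Cofibrant Cof P) (hPf : Fibrant Fib P)
    (hQc : Cofibrant Cof Q) (hQf : Fibrant Fib Q) (hTf : Fibrant Fib T)
    {α β : P ⟶ Q} (htp : Htp Cof Fib (α ≫ s) (β ≫ s)) : Htp Cof Fib α β := by
  suffices H : ∀ k k' : P ⟶ T, Htp Cof Fib k k' →
      ∀ α β : P ⟶ Q, α ≫ s = k → β ≫ s = k' → Htp Cof Fib α β from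
    H _ _ htp α β rfl rfl
  intro k k' htp
  induction htp with
  | rel x y hxy =>
    intro α β hα hβ
    obtain ⟨α', hα's, hc⟩ := celem_lift hs hQf hTf (pelem_to_celem hWM hPc hPf hxy) hα
    refine htp_trans (htp_of_pelem (celem_to_pelem hWM hQc hQf hc).1) ?_
    exact htp_of_eq_comp hWM hs hPc hPf hQc hQf (hα's.trans hβ.symm)
  | refl x =>
    intro α β hα hβ
    exact htp_of_eq_comp hWM hs hPc hPf hQc hQf (hα.trans hβ.symm)
  | symm x y _ ih =>
    intro α β hα hβ
    exact htp_symm (ih β α hβ hα)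
  | trans x y z _ _ ih1 ih2 =>
    intro α β hα hβ
    obtain ⟨γ, hγ⟩ := lift_afib hWM hs hPc y
    exact htp_trans (ih1 α γ hα hγ) (ih2 γ β hγ hβ)

lemma htp_of_sandwich (hWM : IsWeakModel Cof Fib) {Z P Q T : C} {r : Z ⟶ P}
    (hr : IsAcyclicCof Cof Fib r) {s : Q ⟶ T} (hs : IsAcyclicFib Cof Fib s)
    (hPc : Cofibrant Cof P) (hPf : Fibrant Fib P)
    (hQc : Cofibrant Cof Q) (hQf : Fibrant Fib Q) (hTf : Fibrant Fib T)
    {ψ ψ'' : P ⟶ Q} (heq : r ≫ ψ ≫ s = r ≫ ψ'' ≫ s) : Htp Cof Fib ψ ψ'' := by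
  have hlp := hr.2 s hs.1 hQf hTf
  have w : (r ≫ ψ'') ≫ s = r ≫ (ψ ≫ s) := by
    rw [Category.assoc, heq]
  obtain ⟨χ, hχ1, hχ2⟩ := getLift hlp w
  have h1 : Htp Cof Fib ψ χ :=
    htp_of_eq_comp hWM hs hPc hPf hQc hQf hχ2.symm
  have h2 : Htp Cof Fib χ ψ'' :=
    htp_of_pelem (pelem_ext hWM hr hQc hQf (pelem_refl hWM hQc hQf (r ≫ ψ'')) hχ1 rfl)
  exact htp_trans h1 h2

end Dev2
section Dev3
set_option linter.unusedSectionVars false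
set_option linter.unusedVariables false
set_option maxHeartbeats 1000000
variable {C : Type u} [Category.{v} C] [HasInitial C] [HasTerminal C]
variable {Cof Fib : MorphismProperty C}

/-- The link of a replacement: either a forward acyclic cofibration (cofibrant,
non-fibrant case) or a backward acyclic fibration (fibrant case). -/
inductive LinkData (Cof Fib : MorphismProperty C) (Z R : C) : Type v
  | fwd (r : Z ⟶ R) (hr : IsAcyclicCof Cof Fib r) (hZc : Cofibrant Cof Z)
      (hZnf : ¬ Fibrant Fib Z)
  | bwd (s : R ⟶ Z) (hs : IsAcyclicFib Cof Fib s) (hZf : Fibrant Fib Z)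

/-- A bifibrant replacement of an object. -/
structure ReplData (Cof Fib : MorphismProperty C) (Z : C) : Type (max u v) where
  R : C
  hRc : Cofibrant Cof R
  hRf : Fibrant Fib R
  link : LinkData Cof Fib Z R

lemma repl_exists (hWM : IsWeakModel Cof Fib) (Z : Ccf Cof Fib) :
    Nonempty (ReplData Cof Fib Z.obj) := by
  classical
  by_cases hf : Fibrant Fib Z.obj
  · obtain ⟨M, i, q, hi, hq, hiq⟩ :=
      hWM.factor_cof_afib (initial.to Z.obj) hWM.cofClass.initial_cofibrant hf
    refine ⟨⟨M, ?_, fibrant_of_fib hWM hq.1 hf, .bwd q hq hf⟩⟩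
    show Cof (initial.to M)
    rw [initial.hom_ext (initial.to M) i]
    exact hi
  · have hc : Cofibrant Cof Z.obj := Z.property.resolve_right hf
    obtain ⟨M, i, q, hi, hq, hiq⟩ :=
      hWM.factor_acof_fib (terminal.from Z.obj) hc hWM.fibClass.terminal_fibrant
    refine ⟨⟨M, cofibrant_of_cof hWM hi.1 hc, ?_, .fwd i hi hc hf⟩⟩
    show Fib (terminal.from M)
    rw [terminal.hom_ext (terminal.from M) q]
    exact hq

/-- Choice of a bifibrant replacement for every fibrant-or-cofibrant object. -/
noncomputable def repl (hWM : IsWeakModel Cof Fib) (Z : Ccf Cof Fib) :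
    ReplData Cof Fib Z.obj :=
  Classical.choice (repl_exists hWM Z)

/-- Compatibility of a map between replacements with a map between objects. -/
def CompL {Z Z₁ R R₁ : C} :
    LinkData Cof Fib Z R → LinkData Cof Fib Z₁ R₁ → (Z ⟶ Z₁) → (R ⟶ R₁) → Prop
  | .fwd r _ _ _, .fwd r₁ _ _ _, φ, ψ => r ≫ ψ = φ ≫ r₁
  | .fwd r _ _ _, .bwd s₁ _ _, φ, ψ => r ≫ ψ ≫ s₁ = φ
  | .bwd s _ _, .fwd r₁ _ _ _, φ, ψ => ψ = s ≫ φ ≫ r₁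
  | .bwd s _ _, .bwd s₁ _ _, φ, ψ => ψ ≫ s₁ = s ≫ φ

end Dev3
section Dev4
set_option linter.unusedSectionVars false
set_option linter.unusedVariables false
set_option maxHeartbeats 1000000
variable {C : Type u} [Category.{v} C] [HasInitial C] [HasTerminal C]
variable {Cof Fib : MorphismProperty C}

lemma comp_exists (hWM : IsWeakModel Cof Fib) {Z Z₁ : C}
    (D : ReplData Cof Fib Z) (D₁ : ReplData Cof Fib Z₁) (φ : Z ⟶ Z₁) :
    ∃ ψ : D.R ⟶ D₁.R, CompL D.link D₁.link φ ψ := by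
  obtain ⟨R, hRc, hRf, l⟩ := D
  obtain ⟨R₁, hR₁c, hR₁f, l₁⟩ := D₁
  cases l with
  | fwd r hr hZc hZnf =>
    cases l₁ with
    | fwd r₁ hr₁ hZ₁c hZ₁nf =>
      obtain ⟨ψ, hψ⟩ := ext_acof hWM hr hR₁f (φ ≫ r₁)
      exact ⟨ψ, hψ⟩
    | bwd s₁ hs₁ hZ₁f =>
      obtain ⟨κ, hκ⟩ := lift_afib hWM hs₁ hZc φ
      obtain ⟨ψ, hψ⟩ := ext_acof hWM hr hR₁f κ
      refine ⟨ψ, ?_⟩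
      show r ≫ ψ ≫ s₁ = φ
      rw [← hκ, ← hψ, Category.assoc]
  | bwd s hs hZf =>
    cases l₁ with
    | fwd r₁ hr₁ hZ₁c hZ₁nf => exact ⟨s ≫ φ ≫ r₁, rfl⟩
    | bwd s₁ hs₁ hZ₁f =>
      obtain ⟨ψ, hψ⟩ := lift_afib hWM hs₁ hRc (s ≫ φ)
      exact ⟨ψ, hψ⟩

lemma comp_unique (hWM : IsWeakModel Cof Fib) {Z Z₁ : C}
    (D : ReplData Cof Fib Z) (D₁ : ReplData Cof Fib Z₁) (φ : Z ⟶ Z₁)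
    {ψ ψ' : D.R ⟶ D₁.R} (h : CompL D.link D₁.link φ ψ)
    (h' : CompL D.link D₁.link φ ψ') : Htp Cof Fib ψ ψ' := by
  obtain ⟨R, hRc, hRf, l⟩ := D
  obtain ⟨R₁, hR₁c, hR₁f, l₁⟩ := D₁
  cases l with
  | fwd r hr hZc hZnf =>
    cases l₁ with
    | fwd r₁ hr₁ hZ₁c hZ₁nf =>
      replace h : r ≫ ψ = φ ≫ r₁ := h
      replace h' : r ≫ ψ' = φ ≫ r₁ := h'
      exact htp_of_pelem (pelem_ext hWM hr hR₁c hR₁f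
        (pelem_refl hWM hR₁c hR₁f (φ ≫ r₁)) h h')
    | bwd s₁ hs₁ hZ₁f =>
      replace h : r ≫ ψ ≫ s₁ = φ := h
      replace h' : r ≫ ψ' ≫ s₁ = φ := h'
      exact htp_of_sandwich hWM hr hs₁ hRc hRf hR₁c hR₁f hZ₁f (h.trans h'.symm)
  | bwd s hs hZf =>
    cases l₁ with
    | fwd r₁ hr₁ hZ₁c hZ₁nf =>
      replace h : ψ = s ≫ φ ≫ r₁ := h
      replace h' : ψ' = s ≫ φ ≫ r₁ := h'
      exact htp_of_eq (h.trans h'.symm)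
    | bwd s₁ hs₁ hZ₁f =>
      replace h : ψ ≫ s₁ = s ≫ φ := h
      replace h' : ψ' ≫ s₁ = s ≫ φ := h'
      exact htp_of_eq_comp hWM hs₁ hRc hRf hR₁c hR₁f (h.trans h'.symm)

lemma comp_comp {Z Z₁ Z₂ R R₁ R₂ : C}
    {l : LinkData Cof Fib Z R} {l₁ : LinkData Cof Fib Z₁ R₁}
    {l₂ : LinkData Cof Fib Z₂ R₂} {φ : Z ⟶ Z₁} {φ' : Z₁ ⟶ Z₂}
    {ψ : R ⟶ R₁} {ψ' : R₁ ⟶ R₂}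
    (h : CompL l l₁ φ ψ) (h' : CompL l₁ l₂ φ' ψ') :
    CompL l l₂ (φ ≫ φ') (ψ ≫ ψ') := by
  cases l with
  | fwd r hr hZc hZnf =>
    cases l₁ with
    | fwd r₁ hr₁ _ _ =>
      replace h : r ≫ ψ = φ ≫ r₁ := h
      cases l₂ with
      | fwd r₂ _ _ _ =>
        replace h' : r₁ ≫ ψ' = φ' ≫ r₂ := h'
        show r ≫ ψ ≫ ψ' = (φ ≫ φ') ≫ r₂
        rw [← Category.assoc, h, Category.assoc, h', Category.assoc]
      | bwd s₂ _ _ =>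
        replace h' : r₁ ≫ ψ' ≫ s₂ = φ' := h'
        show r ≫ (ψ ≫ ψ') ≫ s₂ = φ ≫ φ'
        rw [← h', ← Category.assoc, ← Category.assoc, ← Category.assoc, h]
        simp
    | bwd s₁ hs₁ _ =>
      replace h : r ≫ ψ ≫ s₁ = φ := h
      cases l₂ with
      | fwd r₂ _ _ _ =>
        replace h' : ψ' = s₁ ≫ φ' ≫ r₂ := h'
        show r ≫ ψ ≫ ψ' = (φ ≫ φ') ≫ r₂
        rw [h', ← h]
        simp
      | bwd s₂ _ _ =>
        replace h' : ψ' ≫ s₂ = s₁ ≫ φ' := h'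
        show r ≫ (ψ ≫ ψ') ≫ s₂ = φ ≫ φ'
        rw [Category.assoc, h', ← h]
        simp
  | bwd s hs hZf =>
    cases l₁ with
    | fwd r₁ hr₁ _ _ =>
      replace h : ψ = s ≫ φ ≫ r₁ := h
      cases l₂ with
      | fwd r₂ _ _ _ =>
        replace h' : r₁ ≫ ψ' = φ' ≫ r₂ := h'
        show ψ ≫ ψ' = s ≫ (φ ≫ φ') ≫ r₂
        rw [h]
        simp [reassoc_of% h', h']
      | bwd s₂ _ _ =>
        replace h' : r₁ ≫ ψ' ≫ s₂ = φ' := h'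
        show (ψ ≫ ψ') ≫ s₂ = s ≫ φ ≫ φ'
        rw [h, ← h']
        simp
    | bwd s₁ hs₁ _ =>
      replace h : ψ ≫ s₁ = s ≫ φ := h
      cases l₂ with
      | fwd r₂ _ _ _ =>
        replace h' : ψ' = s₁ ≫ φ' ≫ r₂ := h'
        show ψ ≫ ψ' = s ≫ (φ ≫ φ') ≫ r₂
        rw [h', ← Category.assoc, h]
        simp
      | bwd s₂ _ _ =>
        replace h' : ψ' ≫ s₂ = s₁ ≫ φ' := h'
        show (ψ ≫ ψ') ≫ s₂ = s ≫ φ ≫ φ'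
        rw [Category.assoc, h', ← Category.assoc, h]
        simp

lemma comp_id {Z R : C} (l : LinkData Cof Fib Z R) : CompL l l (𝟙 Z) (𝟙 R) := by
  cases l with
  | fwd r hr hZc hZnf => show r ≫ 𝟙 R = 𝟙 Z ≫ r; simp
  | bwd s hs hZf => show 𝟙 R ≫ s = s ≫ 𝟙 Z; simp

/-- The chosen transition map between the replacements. -/
noncomputable def theta (hWM : IsWeakModel Cof Fib) {Z Z₁ : Ccf Cof Fib}
    (φ : Z ⟶ Z₁) : (repl hWM Z).R ⟶ (repl hWM Z₁).R :=
  (comp_exists hWM (repl hWM Z) (repl hWM Z₁) φ.hom).choose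

lemma theta_spec (hWM : IsWeakModel Cof Fib) {Z Z₁ : Ccf Cof Fib} (φ : Z ⟶ Z₁) :
    CompL (repl hWM Z).link (repl hWM Z₁).link φ.hom (theta hWM φ) :=
  (comp_exists hWM (repl hWM Z) (repl hWM Z₁) φ.hom).choose_spec

lemma theta_unique (hWM : IsWeakModel Cof Fib) {Z Z₁ : Ccf Cof Fib} (φ : Z ⟶ Z₁)
    {ψ : (repl hWM Z).R ⟶ (repl hWM Z₁).R}
    (h : CompL (repl hWM Z).link (repl hWM Z₁).link φ.hom ψ) :
    Htp Cof Fib ψ (theta hWM φ) :=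
  comp_unique hWM _ _ φ.hom h (theta_spec hWM φ)

end Dev4
section Dev5
set_option linter.unusedSectionVars false
set_option linter.unusedVariables false
set_option maxHeartbeats 1000000
variable {C : Type u} [Category.{v} C] [HasInitial C] [HasTerminal C]
variable {Cof Fib : MorphismProperty C}

lemma htp_congr {S V : C} {g g' h h' : S ⟶ V} (hg : g = g') (hh : h = h')
    (ht : Htp Cof Fib g h) : Htp Cof Fib g' h' := by
  subst hg; subst hh; exact ht

lemma comp_hequiv (hWM : IsWeakModel Cof Fib) {Z Z₁ : C}
    (D : ReplData Cof Fib Z) (D₁ : ReplData Cof Fib Z₁) (φ : Z ⟶ Z₁)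
    (hφ : (IsAcyclicCof Cof Fib φ ∧ Cofibrant Cof Z) ∨
      (IsAcyclicFib Cof Fib φ ∧ Fibrant Fib Z₁))
    {ψ : D.R ⟶ D₁.R} (hψ : CompL D.link D₁.link φ ψ) :
    ∃ ξ : D₁.R ⟶ D.R,
      Htp Cof Fib (ψ ≫ ξ) (𝟙 D.R) ∧ Htp Cof Fib (ξ ≫ ψ) (𝟙 D₁.R) := by
  obtain ⟨R, hRc, hRf, l⟩ := D
  obtain ⟨R₁, hR₁c, hR₁f, l₁⟩ := D₁
  rcases hφ with ⟨hac, hZc⟩ | ⟨haf, hZ₁f⟩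
  · -- acyclic cofibration case
    have hZ₁c : Cofibrant Cof Z₁ := cofibrant_of_cof hWM hac.1 hZc
    cases l with
    | fwd r hr hZc' hZnf =>
      cases l₁ with
      | fwd r₁ hr₁ hZ₁c' hZ₁nf =>
        replace hψ : r ≫ ψ = φ ≫ r₁ := hψ
        obtain ⟨τ, hτ⟩ := ext_acof hWM hac hRf r
        obtain ⟨ξ, hξ⟩ := ext_acof hWM hr₁ hRf τ
        refine ⟨ξ, ?_, ?_⟩
        · apply htp_of_pelem
          apply pelem_ext hWM hr hRc hRf (pelem_refl hWM hRc hRf r)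
          · rw [← Category.assoc, hψ, Category.assoc, hξ, hτ]
          · simp
        · apply htp_precomp_cancel hWM hr₁ hR₁c hR₁f
          have hp : PElem Cof Fib (τ ≫ ψ) r₁ := by
            apply pelem_ext hWM hac hR₁c hR₁f (pelem_refl hWM hR₁c hR₁f (φ ≫ r₁))
            · rw [← Category.assoc, hτ, hψ]
            · rfl
          refine htp_congr ?_ (Category.comp_id r₁).symm (htp_of_pelem hp)
          rw [← Category.assoc, hξ]
      | bwd s₁ hs₁ hZ₁f =>
        replace hψ : r ≫ ψ ≫ s₁ = φ := hψ
        obtain ⟨τ, hτ⟩ := ext_acof hWM hac hRf r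
        refine ⟨s₁ ≫ τ, ?_, ?_⟩
        · apply htp_of_pelem
          apply pelem_ext hWM hr hRc hRf (pelem_refl hWM hRc hRf r)
          · rw [show r ≫ ψ ≫ s₁ ≫ τ = (r ≫ ψ ≫ s₁) ≫ τ by simp, hψ, hτ]
          · simp
        · apply htp_postcomp_cancel hWM hs₁ hR₁c hR₁f hR₁c hR₁f hZ₁f
          have hp : PElem Cof Fib (τ ≫ ψ ≫ s₁) (𝟙 Z₁) := by
            apply pelem_ext hWM hac hZ₁c hZ₁f (pelem_refl hWM hZ₁c hZ₁f φ)
            · rw [show φ ≫ τ ≫ ψ ≫ s₁ = (φ ≫ τ) ≫ ψ ≫ s₁ by simp, hτ, hψ]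
            · simp
          refine htp_congr ?_ (by simp) (htp_pre s₁ (htp_of_pelem hp))
          simp
    | bwd s hs hZf =>
      cases l₁ with
      | fwd r₁ hr₁ hZ₁c' hZ₁nf =>
        replace hψ : ψ = s ≫ φ ≫ r₁ := hψ
        obtain ⟨ret, hret⟩ := ext_acof hWM hac hZf (𝟙 Z)
        obtain ⟨e, he⟩ := lift_afib hWM hs hZc (𝟙 Z)
        obtain ⟨ξ, hξ⟩ := ext_acof hWM hr₁ hRf (ret ≫ e)
        have e2 : ψ ≫ ξ = s ≫ e := by
          rw [hψ]
          simp only [Category.assoc]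
          rw [hξ, reassoc_of% hret]
        refine ⟨ξ, ?_, ?_⟩
        · refine htp_congr e2.symm rfl ?_
          apply htp_of_eq_comp hWM hs hRc hRf hRc hRf
          simp [he]
        · apply htp_precomp_cancel hWM hr₁ hR₁c hR₁f
          have hp : PElem Cof Fib (ret ≫ φ ≫ r₁) r₁ := by
            apply pelem_ext hWM hac hR₁c hR₁f (pelem_refl hWM hR₁c hR₁f (φ ≫ r₁))
            · rw [reassoc_of% hret]
            · rfl
          refine htp_congr ?_ (Category.comp_id r₁).symm (htp_of_pelem hp)
          symm
          rw [← Category.assoc, hξ, hψ]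
          simp only [Category.assoc]
          rw [reassoc_of% he]
      | bwd s₁ hs₁ hZ₁f =>
        replace hψ : ψ ≫ s₁ = s ≫ φ := hψ
        obtain ⟨ret, hret⟩ := ext_acof hWM hac hZf (𝟙 Z)
        obtain ⟨ξ, hξ⟩ := lift_afib hWM hs hR₁c (s₁ ≫ ret)
        refine ⟨ξ, ?_, ?_⟩
        · apply htp_of_eq_comp hWM hs hRc hRf hRc hRf
          rw [Category.assoc, hξ, ← Category.assoc, hψ, Category.assoc, hret]
          simp
        · apply htp_postcomp_cancel hWM hs₁ hR₁c hR₁f hR₁c hR₁f hZ₁f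
          have hp : PElem Cof Fib (ret ≫ φ) (𝟙 Z₁) := by
            apply pelem_ext hWM hac hZ₁c hZ₁f (pelem_refl hWM hZ₁c hZ₁f φ)
            · rw [← Category.assoc, hret]; simp
            · simp
          refine htp_congr ?_ (by simp) (htp_pre s₁ (htp_of_pelem hp))
          rw [Category.assoc, hψ]
          conv_rhs => rw [← Category.assoc, hξ]
          simp
  · -- acyclic fibration case
    have hZf : Fibrant Fib Z := fibrant_of_fib hWM haf.1 hZ₁f
    cases l with
    | fwd r hr hZc' hZnf => exact absurd hZf hZnf
    | bwd s hs hZf' =>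
      cases l₁ with
      | fwd r₁ hr₁ hZ₁c' hZ₁nf => exact absurd hZ₁f hZ₁nf
      | bwd s₁ hs₁ hZ₁f' =>
        replace hψ : ψ ≫ s₁ = s ≫ φ := hψ
        have hsφ : IsAcyclicFib Cof Fib (s ≫ φ) := acFib_comp hWM hs haf
        obtain ⟨ξ, hξ⟩ := lift_afib hWM hsφ hR₁c s₁
        refine ⟨ξ, ?_, ?_⟩
        · apply htp_of_eq_comp hWM hsφ hRc hRf hRc hRf
          rw [Category.assoc, hξ, hψ]
          simp
        · apply htp_of_eq_comp hWM hs₁ hR₁c hR₁f hR₁c hR₁f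
          rw [Category.assoc, hψ, hξ]
          simp

end Dev5
section Dev6
set_option linter.unusedSectionVars false
set_option linter.unusedVariables false
set_option maxHeartbeats 1000000
variable {C : Type u} [Category.{v} C] [HasInitial C] [HasTerminal C]
variable {Cof Fib : MorphismProperty C}

lemma htp_flatten {S V : C} {g h : S ⟶ V}
    (ht : Relation.EqvGen (Htp Cof Fib (S := S) (V := V)) g h) : Htp Cof Fib g h := by
  induction ht with
  | rel x y hxy => exact hxy
  | refl x => exact htp_refl x
  | symm x y _ ih => exact htp_symm ih
  | trans x y z _ _ ih1 ih2 => exact htp_trans ih1 ih2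

lemma htp_of_quot_eq {S V : C} {g h : S ⟶ V}
    (he : Quot.mk (Htp Cof Fib (S := S) (V := V)) g = Quot.mk _ h) :
    Htp Cof Fib g h := htp_flatten (Quot.eq.mp he)

/-- The homotopy-classes-of-maps-from-`S` functor on `C^{c∪f}`. -/
noncomputable def Ffun (hWM : IsWeakModel Cof Fib) (S : C) (hSc : Cofibrant Cof S)
    (hSf : Fibrant Fib S) : Ccf Cof Fib ⥤ Type v where
  obj Z := Quot (Htp Cof Fib (S := S) (V := (repl hWM Z).R))
  map {Z Z₁} φ := TypeCat.ofHom (Quot.map (fun g => g ≫ theta hWM φ)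
    (fun a b hab => htp_post hWM hSc hSf (repl hWM Z₁).hRc (repl hWM Z₁).hRf _ hab))
  map_id Z := by
    ext x
    refine Quot.inductionOn x fun g => ?_
    refine Quot.sound (htp_trans (htp_pre g ?_) (htp_of_eq (Category.comp_id g)))
    exact htp_symm (theta_unique hWM (𝟙 Z) (comp_id (repl hWM Z).link))
  map_comp {Z Z₁ Z₂} φ φ' := by
    ext x
    refine Quot.inductionOn x fun g => ?_
    refine Quot.sound (htp_trans (htp_pre g ?_) (htp_of_eq (Category.assoc _ _ _).symm))
    exact htp_symm (theta_unique hWM (φ ≫ φ')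
      (comp_comp (theta_spec hWM φ) (theta_spec hWM φ')))

lemma Ffun_inverts (hWM : IsWeakModel Cof Fib) (S : C) (hSc : Cofibrant Cof S)
    (hSf : Fibrant Fib S) :
    (WcfProp Cof Fib).IsInvertedBy (Ffun hWM S hSc hSf) := by
  intro Z Z₁ φ hφ
  have hφ' : (IsAcyclicCof Cof Fib φ.hom ∧ Cofibrant Cof Z.obj) ∨
      (IsAcyclicFib Cof Fib φ.hom ∧ Fibrant Fib Z₁.obj) := hφ
  obtain ⟨ξ, h1, h2⟩ := comp_hequiv hWM (repl hWM Z) (repl hWM Z₁) φ.hom hφ' (theta_spec hWM φ)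
  refine ⟨⟨TypeCat.ofHom (Quot.map (fun g => g ≫ ξ)
    (fun a b hab => htp_post hWM hSc hSf (repl hWM Z).hRc (repl hWM Z).hRf _ hab)), ?_, ?_⟩⟩
  · ext x
    refine Quot.inductionOn x fun g => ?_
    refine Quot.sound ?_
    refine htp_trans (htp_congr (Category.assoc _ _ _).symm rfl (htp_pre g h1)) ?_
    exact htp_of_eq (Category.comp_id g)
  · ext x
    refine Quot.inductionOn x fun g => ?_
    refine Quot.sound ?_
    refine htp_trans (htp_congr (Category.assoc _ _ _).symm rfl (htp_pre g h2)) ?_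
    exact htp_of_eq (Category.comp_id g)

lemma bij_of_isIsoQ (hWM : IsWeakModel Cof Fib) (S : C) (hSc : Cofibrant Cof S)
    (hSf : Fibrant Fib S) {Z Z₁ : Ccf Cof Fib} (φ : Z ⟶ Z₁)
    (h : IsIso ((WcfProp Cof Fib).Q.map φ)) :
    Function.Bijective ((Ffun hWM S hSc hSf).map φ) := by
  have hinv := Ffun_inverts hWM S hSc hSf
  have hfac := Localization.Construction.fac (Ffun hWM S hSc hSf) hinv
  haveI := h
  have h2 : IsIso (((WcfProp Cof Fib).Q ⋙
      Localization.Construction.lift (Ffun hWM S hSc hSf) hinv).map φ) := by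
    rw [Functor.comp_map]
    infer_instance
  rw [hfac] at h2
  exact (isIso_iff_bijective _).mp h2

end Dev6
section Dev7
set_option linter.unusedSectionVars false
set_option linter.unusedVariables false
set_option maxHeartbeats 1000000
variable {C : Type u} [Category.{v} C] [HasInitial C] [HasTerminal C]
variable {Cof Fib : MorphismProperty C}

lemma hequiv_of_isEquivQ (hWM : IsWeakModel Cof Fib) {Xh Yh : C}
    (hXc : Cofibrant Cof Xh) (hXf : Fibrant Fib Xh)
    (hYc : Cofibrant Cof Yh) (hYf : Fibrant Fib Yh) (f' : Xh ⟶ Yh)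
    (hQ : IsIso ((WcfProp Cof Fib).Q.map (homCcf Cof Fib (Or.inl hXc) (Or.inl hYc) f'))) :
    ∃ g : Yh ⟶ Xh, Htp Cof Fib (f' ≫ g) (𝟙 Xh) ∧ Htp Cof Fib (g ≫ f') (𝟙 Yh) := by
  let Zc : Ccf Cof Fib := ⟨Xh, Or.inl hXc⟩
  let Z₁c : Ccf Cof Fib := ⟨Yh, Or.inl hYc⟩
  let φ : Zc ⟶ Z₁c := homCcf Cof Fib (Or.inl hXc) (Or.inl hYc) f'
  have hψspec := theta_spec hWM φ
  rcases hl : (repl hWM Zc).link with ⟨r, hr, hc, hnf⟩ | ⟨s, hs, hZf⟩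
  · exact absurd hXf hnf
  rcases hl₁ : (repl hWM Z₁c).link with ⟨r₁, hr₁, hc₁, hnf₁⟩ | ⟨s₁, hs₁, hZ₁f⟩
  · exact absurd hYf hnf₁
  rw [hl, hl₁] at hψspec
  replace hψspec : theta hWM φ ≫ s₁ = s ≫ f' := hψspec
  have bij1 := bij_of_isIsoQ hWM (repl hWM Z₁c).R (repl hWM Z₁c).hRc (repl hWM Z₁c).hRf φ hQ
  obtain ⟨x, hx⟩ := bij1.2 (Quot.mk _ (𝟙 (repl hWM Z₁c).R))
  obtain ⟨ξ, rfl⟩ := Quot.exists_rep x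
  have hξψ : Htp Cof Fib (ξ ≫ theta hWM φ) (𝟙 (repl hWM Z₁c).R) := htp_of_quot_eq hx
  have bij2 := bij_of_isIsoQ hWM (repl hWM Zc).R (repl hWM Zc).hRc (repl hWM Zc).hRf φ hQ
  have key : Quot.mk (Htp Cof Fib) (theta hWM φ ≫ ξ) = Quot.mk _ (𝟙 (repl hWM Zc).R) := by
    apply bij2.1
    exact Quot.sound (htp_congr (by simp) (by simp) (htp_pre (theta hWM φ) hξψ))
  have hψξ : Htp Cof Fib (theta hWM φ ≫ ξ) (𝟙 (repl hWM Zc).R) := htp_of_quot_eq key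
  obtain ⟨e, he⟩ := lift_afib hWM hs hXc (𝟙 Xh)
  obtain ⟨eY, heY⟩ := lift_afib hWM hs₁ hYc (𝟙 Yh)
  refine ⟨eY ≫ ξ ≫ s, ?_, ?_⟩
  · have hA : Htp Cof Fib (f' ≫ eY) (e ≫ theta hWM φ) := by
      apply htp_of_eq_comp hWM hs₁ hXc hXf (repl hWM Z₁c).hRc (repl hWM Z₁c).hRf
      rw [Category.assoc, heY, Category.assoc, hψspec, ← Category.assoc, he]
      simp
    have hA' := htp_post hWM hXc hXf hXc hXf (ξ ≫ s) hA
    have hB := htp_post hWM hXc hXf hXc hXf s (htp_pre e hψξ)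
    have step1 : Htp Cof Fib (f' ≫ eY ≫ ξ ≫ s) (e ≫ theta hWM φ ≫ ξ ≫ s) :=
      htp_congr (by simp) (by simp) hA'
    have step2 : Htp Cof Fib (e ≫ theta hWM φ ≫ ξ ≫ s) (e ≫ s) :=
      htp_congr (by simp) (by simp) hB
    exact htp_trans step1 (htp_trans step2 (htp_of_eq he))
  · have step : Htp Cof Fib (eY ≫ ξ ≫ theta hWM φ ≫ s₁) (eY ≫ s₁) :=
      htp_congr (by simp) (by simp) (htp_post hWM hYc hYf hYc hYf s₁ (htp_pre eY hξψ))
    refine htp_congr ?_ heY step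
    rw [hψspec]
    simp

lemma strict_lift (hWM : IsWeakModel Cof Fib) {A' B' Xh : C} {i' : A' ⟶ B'}
    (hi' : Cof i') (hA'c : Cofibrant Cof A') (hA'f : Fibrant Fib A')
    (hB'c : Cofibrant Cof B') (hXc : Cofibrant Cof Xh) (hXf : Fibrant Fib Xh)
    {u v : A' ⟶ Xh} (htp : Htp Cof Fib u v) (hv : ∃ t : B' ⟶ Xh, i' ≫ t = v) :
    ∃ t : B' ⟶ Xh, i' ≫ t = u := by
  suffices H : ∀ u v : A' ⟶ Xh, Htp Cof Fib u v →
      ((∃ t, i' ≫ t = u) ↔ (∃ t, i' ≫ t = v)) from (H u v htp).mpr hv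
  intro u v htp
  induction htp with
  | rel x y hxy =>
    constructor
    · rintro ⟨t, ht⟩
      obtain ⟨Pa, K, k0, k1⟩ := hxy
      obtain ⟨M, hM1, hM2⟩ := getLift (Pa.π_pr₀_acyclic.2 i' hi' hA'c hB'c)
        (f := K) (g := t) (by rw [k0, ht])
      exact ⟨M ≫ Pa.π ≫ Pa.pr₁, by rw [← k1, ← hM1]; simp⟩
    · rintro ⟨t, ht⟩
      obtain ⟨Pa, K, k0, k1⟩ := pelem_symm hWM hA'c hA'f hXc hXf hxy
      obtain ⟨M, hM1, hM2⟩ := getLift (Pa.π_pr₀_acyclic.2 i' hi' hA'c hB'c)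
        (f := K) (g := t) (by rw [k0, ht])
      exact ⟨M ≫ Pa.π ≫ Pa.pr₁, by rw [← k1, ← hM1]; simp⟩
  | refl x => exact Iff.rfl
  | symm x y _ ih => exact ih.symm
  | trans x y z _ _ ih1 ih2 => exact ih1.trans ih2

end Dev7
set_option linter.unusedSectionVars false in
set_option linter.unusedVariables false in
set_option maxHeartbeats 1600000 in
/-- given a commutative square with left leg a cofibration between cofibrant
objects and right leg an equivalence between fibrant objects, there is a diagonal map
making the upper triangle commute. -/
theorem statement7 (Cof Fib : MorphismProperty C) (hWM : IsWeakModel Cof Fib)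
    {A B X Y : C} (i : A ⟶ B) (f : X ⟶ Y) (w : A ⟶ X) (b : B ⟶ Y)
    (hi : Cof i) (hA : Cofibrant Cof A) (hB : Cofibrant Cof B)
    (hX : Fibrant Fib X) (hY : Fibrant Fib Y)
    (hf : IsEquivCcf Cof Fib (homCcf Cof Fib (Or.inr hX) (Or.inr hY) f))
    (hsq : w ≫ f = i ≫ b) :
    ∃ t : B ⟶ X, i ≫ t = w := by
  -- Step 1: factor `w` through a bifibrant object `A'`.
  obtain ⟨A', a, p, ha, hp, hap⟩ := hWM.factor_acof_fib w hA hX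
  have hA'c : Cofibrant Cof A' := cofibrant_of_cof hWM ha.1 hA
  have hA'f : Fibrant Fib A' := fibrant_of_fib hWM hp hX
  -- Step 2: push out `i` along `a`.
  obtain ⟨P, inl, inr, hpo, hinl⟩ := hWM.cofClass.pushout_mem i a hi hA hA'c
  have hinr : IsAcyclicCof Cof Fib inr := acCof_of_pushout hWM hpo.flip ha hA hB
  have hPc : Cofibrant Cof P := cofibrant_of_cof hWM hinr.1 hB
  -- Step 3: induced map to `Y`, factored through a bifibrant object `B'`.
  have hcomm : a ≫ (p ≫ f) = i ≫ b := by rw [← Category.assoc, hap, hsq]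
  obtain ⟨B', c, q, hc, hq, hcq⟩ := hWM.factor_acof_fib (hpo.desc (p ≫ f) b hcomm) hPc hY
  have hB'c : Cofibrant Cof B' := cofibrant_of_cof hWM hc.1 hPc
  have hB'f : Fibrant Fib B' := fibrant_of_fib hWM hq hY
  have hi' : Cof (inl ≫ c) := hWM.cofClass.comp_mem _ _ hinl hc.1
  have hsq' : (inl ≫ c) ≫ q = p ≫ f := by
    rw [Category.assoc, hcq, hpo.inl_desc]
  -- Step 4: bifibrant resolutions of `X` and `Y`.
  obtain ⟨Xh, uu, pX, huu, hpX, hupX⟩ := hWM.factor_cof_afib p hA'c hX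
  have hXhc : Cofibrant Cof Xh := cofibrant_of_cof hWM huu hA'c
  have hXhf : Fibrant Fib Xh := fibrant_of_fib hWM hpX.1 hX
  obtain ⟨Yh, vv, pY, hvv, hpY, hvpY⟩ := hWM.factor_cof_afib q hB'c hY
  have hYhc : Cofibrant Cof Yh := cofibrant_of_cof hWM hvv hB'c
  have hYhf : Fibrant Fib Yh := fibrant_of_fib hWM hpY.1 hY
  -- Step 5: lift `pX ≫ f` through `pY` to get a bifibrant model of `f`.
  obtain ⟨f1, hf1⟩ := lift_afib hWM hpY hXhc (pX ≫ f)
  -- Step 6: solve the square `(inl ≫ c, pY)`.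
  obtain ⟨b₂, hb₂1, hb₂2⟩ := getLift (hpY.2 (inl ≫ c) hi' hA'c hB'c)
    (f := uu ≫ f1) (g := q)
    (by rw [Category.assoc, hf1, ← Category.assoc, hupX, hsq'])
  -- Step 7: `f1` is an equivalence in the localization.
  have hQf1 : IsIso ((WcfProp Cof Fib).Q.map
      (homCcf Cof Fib (Or.inl hXhc) (Or.inl hYhc) f1)) := by
    have hpXW : WcfProp Cof Fib (homCcf Cof Fib (Or.inl hXhc) (Or.inr hX) pX) :=
      Or.inr ⟨hpX, hX⟩
    have hpYW : WcfProp Cof Fib (homCcf Cof Fib (Or.inl hYhc) (Or.inr hY) pY) :=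
      Or.inr ⟨hpY, hY⟩
    haveI h1 : IsIso ((WcfProp Cof Fib).Q.map
        (homCcf Cof Fib (Or.inl hXhc) (Or.inr hX) pX)) :=
      Localization.inverts (WcfProp Cof Fib).Q (WcfProp Cof Fib) _ hpXW
    haveI h2 : IsIso ((WcfProp Cof Fib).Q.map
        (homCcf Cof Fib (Or.inl hYhc) (Or.inr hY) pY)) :=
      Localization.inverts (WcfProp Cof Fib).Q (WcfProp Cof Fib) _ hpYW
    haveI h3 : IsIso ((WcfProp Cof Fib).Q.map
        (homCcf Cof Fib (Or.inr hX) (Or.inr hY) f)) := hf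
    have hcompose : homCcf Cof Fib (Or.inl hXhc) (Or.inl hYhc) f1 ≫
        homCcf Cof Fib (Or.inl hYhc) (Or.inr hY) pY =
        homCcf Cof Fib (Or.inl hXhc) (Or.inr hX) pX ≫
        homCcf Cof Fib (Or.inr hX) (Or.inr hY) f := InducedCategory.hom_ext hf1
    have hmap : (WcfProp Cof Fib).Q.map (homCcf Cof Fib (Or.inl hXhc) (Or.inl hYhc) f1) ≫
        (WcfProp Cof Fib).Q.map (homCcf Cof Fib (Or.inl hYhc) (Or.inr hY) pY) =
        (WcfProp Cof Fib).Q.map (homCcf Cof Fib (Or.inl hXhc) (Or.inr hX) pX) ≫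
        (WcfProp Cof Fib).Q.map (homCcf Cof Fib (Or.inr hX) (Or.inr hY) f) := by
      rw [← Functor.map_comp, ← Functor.map_comp, hcompose]
    have heq : (WcfProp Cof Fib).Q.map (homCcf Cof Fib (Or.inl hXhc) (Or.inl hYhc) f1) =
        ((WcfProp Cof Fib).Q.map (homCcf Cof Fib (Or.inl hXhc) (Or.inr hX) pX) ≫
        (WcfProp Cof Fib).Q.map (homCcf Cof Fib (Or.inr hX) (Or.inr hY) f)) ≫
        inv ((WcfProp Cof Fib).Q.map (homCcf Cof Fib (Or.inl hYhc) (Or.inr hY) pY)) := by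
      rw [← hmap]
      simp
    rw [heq]
    infer_instance
  -- Step 8: homotopy inverse of `f1`.
  obtain ⟨g, hfg, hgf⟩ := hequiv_of_isEquivQ hWM hXhc hXhf hYhc hYhf f1 hQf1
  -- Step 9: homotopy between `(inl ≫ c) ≫ (b₂ ≫ g)` and `uu`, then strictify.
  have htp1 : Htp Cof Fib uu ((inl ≫ c) ≫ b₂ ≫ g) := by
    refine htp_symm (htp_congr ?_ (Category.comp_id uu) (htp_pre uu hfg))
    rw [← Category.assoc, ← hb₂1]
    simp
  obtain ⟨th, hth⟩ := strict_lift hWM hi' hA'c hA'f hB'c hXhc hXhf htp1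
    ⟨b₂ ≫ g, rfl⟩
  -- Step 10: assemble the final lift.
  refine ⟨(inr ≫ c) ≫ th ≫ pX, ?_⟩
  have e1 : i ≫ (inr ≫ c) ≫ th ≫ pX = (i ≫ inr) ≫ (c ≫ th) ≫ pX := by simp
  rw [e1, ← hpo.w]
  have e2 : (a ≫ inl) ≫ (c ≫ th) ≫ pX = a ≫ ((inl ≫ c) ≫ th) ≫ pX := by simp
  rw [e2, hth, hupX, hap]

end WMC
end

section
/- Let C be a category equipped with a class of cofibrations and a class of fibrations satisfying the factorization axiom: every morphism from a cofibrant object to a fibrant object factors both as a cofibration followed by an acyclic fibration and as an acyclic cofibration followed by a fibration. Then the following conditions are equivalent: (i) for every bifibrant object A and every factorization of the identity of A as a cofibration A → B followed by an acyclic fibration B → A, the cofibration A → B is an acyclic cofibration; (ii) there is a class F of acyclic fibrations such that every morphism from a cofibrant object to a fibrant object factors as a cofibration followed by a member of F, and condition (i) holds whenever the acyclic fibration part of the factorization lies in F; (iii) every cofibration A → B with A cofibrant and B fibrant admits a relative strong cylinder object; (iv) every cofibration between bifibrant objects admits a relative strong cylinder object. -/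
open CategoryTheory CategoryTheory.Limits

universe w v u

namespace WMC

variable {C : Type u} [Category.{v} C]

variable [HasInitial C] [HasTerminal C]

/-- A cofibration with cofibrant domain has cofibrant codomain. -/
lemma cofibrant_of_cof_s8 {Cof : MorphismProperty C} (hCof : IsCofClass Cof)
    {A B : C} (i : A ⟶ B) (hi : Cof i) (hA : Cofibrant Cof A) : Cofibrant Cof B := by
  have h : initial.to A ≫ i = initial.to B := initial.hom_ext _ _
  have := hCof.comp_mem _ _ hA hi
  rwa [h] at this

/-- A fibration with fibrant codomain has fibrant domain. -/
lemma fibrant_of_fib_s8 {Fib : MorphismProperty C} (hFib : IsFibClass Fib)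
    {A B : C} (q : B ⟶ A) (hq : Fib q) (hA : Fibrant Fib A) : Fibrant Fib B := by
  have h : q ≫ terminal.from A = terminal.from B := terminal.hom_ext _ _
  have := hFib.comp_mem _ _ hq hA
  rwa [h] at this

/-- For any pushout of a cofibration `i : A ⟶ B` (with `A`, `B` cofibrant) along itself,
both coprojections are cofibrations (they agree with the one produced by `pushout_mem`
up to a canonical isomorphism). -/
lemma in₀_cof {Cof : MorphismProperty C} (hCof : IsCofClass Cof)
    {A B P : C} {i : A ⟶ B} (hi : Cof i) (hA : Cofibrant Cof A) (hB : Cofibrant Cof B)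
    {in₀ in₁ : B ⟶ P} (hpo : IsPushout i i in₀ in₁) : Cof in₀ := by
  obtain ⟨P', inl, inr, hpo', hinl⟩ := hCof.pushout_mem i i hi hA hB
  have hP' : Cofibrant Cof P' := cofibrant_of_cof_s8 hCof inl hinl hB
  set e : P' ⟶ P := hpo'.desc in₀ in₁ hpo.w with he
  set e' : P ⟶ P' := hpo.desc inl inr hpo'.w with he'
  have h1 : e ≫ e' = 𝟙 P' := by
    apply hpo'.hom_ext
    · rw [← Category.assoc, hpo'.inl_desc, hpo.inl_desc, Category.comp_id]
    · rw [← Category.assoc, hpo'.inr_desc, hpo.inr_desc, Category.comp_id]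
  have h2 : e' ≫ e = 𝟙 P := by
    apply hpo.hom_ext
    · rw [← Category.assoc, hpo.inl_desc, hpo'.inl_desc, Category.comp_id]
    · rw [← Category.assoc, hpo.inr_desc, hpo'.inr_desc, Category.comp_id]
  have hiso : IsIso e := ⟨e', h1, h2⟩
  have : Cof (inl ≫ e) := hCof.comp_mem _ _ hinl (hCof.iso_mem e hiso hP')
  rwa [hpo'.inl_desc] at this

/-- equivalent characterizations of the cylinder axiom, in the presence of
the factorization axiom. -/
theorem statement8 (Cof Fib : MorphismProperty C)
    (hCof : IsCofClass Cof) (hFib : IsFibClass Fib)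
    (hfac₁ : ∀ {X Y : C} (f : X ⟶ Y), Cofibrant Cof X → Fibrant Fib Y →
      ∃ (Z : C) (i : X ⟶ Z) (q : Z ⟶ Y), Cof i ∧ IsAcyclicFib Cof Fib q ∧ i ≫ q = f)
    (hfac₂ : ∀ {X Y : C} (f : X ⟶ Y), Cofibrant Cof X → Fibrant Fib Y →
      ∃ (Z : C) (i : X ⟶ Z) (q : Z ⟶ Y), IsAcyclicCof Cof Fib i ∧ Fib q ∧ i ≫ q = f) :
    List.TFAE [
      -- (i) for any bifibrant `A` and factorization of `𝟙 A` as a cofibration followed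
      -- by an acyclic fibration, the cofibration is acyclic
      (∀ {A B : C} (i : A ⟶ B) (q : B ⟶ A), Cofibrant Cof A → Fibrant Fib A →
        Cof i → IsAcyclicFib Cof Fib q → i ≫ q = 𝟙 A → IsAcyclicCof Cof Fib i),
      -- (ii) the same restricted to a class F of acyclic fibrations through which every
      -- map from a cofibrant object to a fibrant object factors after a cofibration
      (∃ F : MorphismProperty C,
        (∀ {X Y : C} (q : X ⟶ Y), F q → IsAcyclicFib Cof Fib q) ∧
        (∀ {X Y : C} (f : X ⟶ Y), Cofibrant Cof X → Fibrant Fib Y →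
          ∃ (Z : C) (i : X ⟶ Z) (q : Z ⟶ Y), Cof i ∧ F q ∧ i ≫ q = f) ∧
        (∀ {A B : C} (i : A ⟶ B) (q : B ⟶ A), Cofibrant Cof A → Fibrant Fib A →
          Cof i → F q → i ≫ q = 𝟙 A → IsAcyclicCof Cof Fib i)),
      -- (iii) relative strong cylinders for cofibrations from a cofibrant object
      -- to a fibrant object
      (∀ {A B : C} (i : A ⟶ B), Cof i → Cofibrant Cof A → Fibrant Fib B →
        Nonempty (RelStrongCylinder Cof Fib i)),
      -- (iv) relative strong cylinders for cofibrations between bifibrant objects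
      (∀ {A B : C} (i : A ⟶ B), Cof i → Cofibrant Cof A → Fibrant Fib A →
        Cofibrant Cof B → Fibrant Fib B → Nonempty (RelStrongCylinder Cof Fib i))
    ] := by
  tfae_have 1 → 2
  · intro h1
    exact ⟨fun _ _ q => IsAcyclicFib Cof Fib q, fun _ hq => hq, hfac₁,
      fun i q hA hfA hi hq hiq => h1 i q hA hfA hi hq hiq⟩
  tfae_have 2 → 3
  · rintro ⟨F, hF, hFfac, hFret⟩ A B i hi hA hBfib
    have hB : Cofibrant Cof B := cofibrant_of_cof_s8 hCof i hi hA
    obtain ⟨P, inl, inr, hpo, hinl⟩ := hCof.pushout_mem i i hi hA hB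
    have hP : Cofibrant Cof P := cofibrant_of_cof_s8 hCof inl hinl hB
    obtain ⟨Z, ι, ρ, hι, hρF, hfac⟩ := hFfac (hpo.desc (𝟙 B) (𝟙 B) rfl) hP hBfib
    refine ⟨⟨P, inl, inr, hpo, Z, ι, ρ, hι, ?_, ?_, ?_⟩⟩
    · refine hFret (inl ≫ ι) ρ hB hBfib (hCof.comp_mem _ _ hinl hι) hρF ?_
      rw [Category.assoc, hfac, hpo.inl_desc]
    · rw [hfac, hpo.inl_desc]
    · rw [hfac, hpo.inr_desc]
  tfae_have 3 → 4
  · intro h3 A B i hi hA _ _ hBfib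
    exact h3 i hi hA hBfib
  tfae_have 4 → 1
  · intro h4 A B i q hA hfA hi hq hiq
    have hB : Cofibrant Cof B := cofibrant_of_cof_s8 hCof i hi hA
    have hBfib : Fibrant Fib B := fibrant_of_fib_s8 hFib q hq.1 hfA
    obtain ⟨cyl⟩ := h4 i hi hA hfA hB hBfib
    have hin₀ : Cof cyl.in₀ := in₀_cof hCof hi hA hB cyl.isPushout
    have hBB : Cofibrant Cof cyl.BB := cofibrant_of_cof_s8 hCof _ hin₀ hB
    have hCyl : Cofibrant Cof cyl.Cyl := cofibrant_of_cof_s8 hCof _ cyl.ι_cof hBB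
    refine ⟨hi, ?_⟩
    intro X Y p hp hX hY
    constructor
    intro f g sq
    -- build a homotopy between `q ≫ i` and `𝟙 B` rel `A`, lifting against `q`
    have ht : i ≫ (q ≫ i) = i ≫ 𝟙 B := by
      rw [← Category.assoc, hiq, Category.id_comp, Category.comp_id]
    set t : cyl.BB ⟶ B := cyl.isPushout.desc (q ≫ i) (𝟙 B) ht with htdef
    haveI := hq.2 cyl.ι cyl.ι_cof hBB hCyl
    have sq2 : CommSq t cyl.ι q (cyl.ρ ≫ q) := by
      constructor
      apply cyl.isPushout.hom_ext
      · calc cyl.in₀ ≫ t ≫ q = (cyl.in₀ ≫ t) ≫ q := by rw [Category.assoc]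
          _ = (q ≫ i) ≫ q := by rw [htdef, cyl.isPushout.inl_desc]
          _ = q := by rw [Category.assoc, hiq, Category.comp_id]
          _ = (cyl.in₀ ≫ cyl.ι ≫ cyl.ρ) ≫ q := by rw [cyl.fac₀, Category.id_comp]
          _ = cyl.in₀ ≫ cyl.ι ≫ cyl.ρ ≫ q := by simp only [Category.assoc]
      · calc cyl.in₁ ≫ t ≫ q = (cyl.in₁ ≫ t) ≫ q := by rw [Category.assoc]
          _ = 𝟙 B ≫ q := by rw [htdef, cyl.isPushout.inr_desc]
          _ = q := Category.id_comp q
          _ = (cyl.in₁ ≫ cyl.ι ≫ cyl.ρ) ≫ q := by rw [cyl.fac₁, Category.id_comp]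
          _ = cyl.in₁ ≫ cyl.ι ≫ cyl.ρ ≫ q := by simp only [Category.assoc]
    -- now lift the original square using the acyclic cofibration `in₀ ≫ ι`
    haveI := cyl.in₀_ι_acyclic.2 p hp hX hY
    have hιt : cyl.ι ≫ sq2.lift = t := sq2.fac_left
    have sq3 : CommSq (q ≫ f) (cyl.in₀ ≫ cyl.ι) p (sq2.lift ≫ g) := by
      constructor
      calc (q ≫ f) ≫ p = q ≫ f ≫ p := Category.assoc _ _ _
        _ = q ≫ i ≫ g := by rw [sq.w]
        _ = (q ≫ i) ≫ g := (Category.assoc _ _ _).symm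
        _ = (cyl.in₀ ≫ t) ≫ g := by rw [htdef, cyl.isPushout.inl_desc]
        _ = (cyl.in₀ ≫ cyl.ι ≫ sq2.lift) ≫ g := by rw [hιt]
        _ = (cyl.in₀ ≫ cyl.ι) ≫ sq2.lift ≫ g := by simp only [Category.assoc]
    have hL₁ : (cyl.in₀ ≫ cyl.ι) ≫ sq3.lift = q ≫ f := sq3.fac_left
    have hL₂ : sq3.lift ≫ p = sq2.lift ≫ g := sq3.fac_right
    refine ⟨⟨⟨cyl.in₁ ≫ cyl.ι ≫ sq3.lift, ?_, ?_⟩⟩⟩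
    · calc i ≫ cyl.in₁ ≫ cyl.ι ≫ sq3.lift
          = (i ≫ cyl.in₁) ≫ cyl.ι ≫ sq3.lift := by simp only [Category.assoc]
        _ = (i ≫ cyl.in₀) ≫ cyl.ι ≫ sq3.lift := by rw [cyl.isPushout.w]
        _ = i ≫ (cyl.in₀ ≫ cyl.ι) ≫ sq3.lift := by simp only [Category.assoc]
        _ = i ≫ q ≫ f := by rw [hL₁]
        _ = (i ≫ q) ≫ f := (Category.assoc _ _ _).symm
        _ = f := by rw [hiq, Category.id_comp]
    · calc (cyl.in₁ ≫ cyl.ι ≫ sq3.lift) ≫ p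
          = cyl.in₁ ≫ cyl.ι ≫ sq3.lift ≫ p := by simp only [Category.assoc]
        _ = cyl.in₁ ≫ cyl.ι ≫ sq2.lift ≫ g := by rw [hL₂]
        _ = (cyl.in₁ ≫ cyl.ι ≫ sq2.lift) ≫ g := by simp only [Category.assoc]
        _ = (cyl.in₁ ≫ t) ≫ g := by rw [hιt]
        _ = 𝟙 B ≫ g := by rw [htdef, cyl.isPushout.inr_desc]
        _ = g := Category.id_comp g
  tfae_finish

end WMC
end

section
/- Let C be a category equipped with a class of cofibrations and a class of fibrations satisfying the factorization axiom (every morphism from a cofibrant object to a fibrant object factors both as a cofibration followed by an acyclic fibration and as an acyclic cofibration followed by a fibration) and the cylinder axiom (every cofibration from a cofibrant object to a fibrant object admits a relative strong cylinder object). Then the following conditions are equivalent: (i) C is a weak model category, i.e. every fibration from a cofibrant object to a fibrant object admits a relative strong path object; (ii) for composable cofibrations i : A → B and j : B → C between bifibrant objects, if i and j ∘ i are acyclic cofibrations then j is an acyclic cofibration; (iii) there is a class J of acyclic cofibrations such that every morphism from a cofibrant object to a fibrant object factors as a member of J followed by a fibration, and condition (ii) holds whenever moreover i belongs to J. -/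
open CategoryTheory CategoryTheory.Limits

universe w v u

namespace WMC

variable {C : Type u} [Category.{v} C]

variable [HasInitial C] [HasTerminal C]

section Helpers

variable {Cof Fib : MorphismProperty C}

lemma cofibrant_target (hCof : IsCofClass Cof) {X Y : C} (f : X ⟶ Y) (hf : Cof f)
    (hX : Cofibrant Cof X) : Cofibrant Cof Y := by
  have h : initial.to Y = initial.to X ≫ f := initial.hom_ext _ _
  rw [Cofibrant, h]
  exact hCof.comp_mem _ _ hX hf

lemma fibrant_source (hFib : IsFibClass Fib) {X Y : C} (f : X ⟶ Y) (hf : Fib f)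
    (hY : Fibrant Fib Y) : Fibrant Fib X := by
  have h : terminal.from X = f ≫ terminal.from Y := terminal.hom_ext _ _
  rw [Fibrant, h]
  exact hFib.comp_mem _ _ hf hY

lemma cofibrant_of_isPushout (hCof : IsCofClass Cof) {A X B P : C}
    {f : A ⟶ X} {i : A ⟶ B} {inl : X ⟶ P} {inr : B ⟶ P} (h : IsPushout f i inl inr)
    (hi : Cof i) (hA : Cofibrant Cof A) (hX : Cofibrant Cof X) : Cofibrant Cof P := by
  obtain ⟨P₀, inl₀, inr₀, h₀, hinl₀⟩ := hCof.pushout_mem i f hi hA hX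
  have hP₀ : Cofibrant Cof P₀ := cofibrant_target hCof inl₀ hinl₀ hX
  have e := h₀.isoIsPushout _ _ h
  exact cofibrant_target hCof e.hom (hCof.iso_mem e.hom inferInstance hP₀) hP₀

lemma fibrant_of_isPullback (hFib : IsFibClass Fib) {A B X P : C}
    {p : B ⟶ A} {f : X ⟶ A} {fst : P ⟶ X} {snd : P ⟶ B} (h : IsPullback fst snd f p)
    (hp : Fib p) (hA : Fibrant Fib A) (hX : Fibrant Fib X) : Fibrant Fib P := by
  obtain ⟨P₀, fst₀, snd₀, h₀, hfst₀⟩ := hFib.pullback_mem p f hp hA hX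
  have hP₀ : Fibrant Fib P₀ := fibrant_source hFib fst₀ hfst₀ hX
  have e := h.isoIsPullback _ _ h₀
  exact fibrant_source hFib e.hom (hFib.iso_mem e.hom inferInstance hP₀) hP₀

/-- A cofibration which is a section of an acyclic fibration is an acyclic cofibration. -/
lemma section_acyclicCof (hCof : IsCofClass Cof) (hFib : IsFibClass Fib)
    (hcyl : ∀ {A B : C} (i : A ⟶ B), Cof i → Cofibrant Cof A → Fibrant Fib B →
      Nonempty (RelStrongCylinder Cof Fib i))
    {Y F : C} (s : Y ⟶ F) (r : F ⟶ Y) (hs : Cof s) (hsr : s ≫ r = 𝟙 Y)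
    (hr : IsAcyclicFib Cof Fib r) (hY : Cofibrant Cof Y) (hF : Cofibrant Cof F)
    (hFf : Fibrant Fib F) : IsAcyclicCof Cof Fib s := by
  obtain ⟨cyl⟩ := hcyl s hs hY hFf
  have hBBc : Cofibrant Cof cyl.BB := cofibrant_of_isPushout hCof cyl.isPushout hs hY hF
  have hCylc : Cofibrant Cof cyl.Cyl := cofibrant_target hCof cyl.ι cyl.ι_cof hBBc
  have hc₂w : s ≫ (r ≫ s) = s ≫ 𝟙 F := by
    rw [Category.comp_id, ← Category.assoc, hsr, Category.id_comp]
  set c₂ := cyl.isPushout.desc (r ≫ s) (𝟙 F) hc₂w with hc₂def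
  have desc0 : cyl.in₀ ≫ c₂ = r ≫ s := cyl.isPushout.inl_desc _ _ _
  have desc1 : cyl.in₁ ≫ c₂ = 𝟙 F := cyl.isPushout.inr_desc _ _ _
  have fac0' : (cyl.in₀ ≫ cyl.ι) ≫ cyl.ρ = 𝟙 F := by rw [Category.assoc]; exact cyl.fac₀
  have fac1' : (cyl.in₁ ≫ cyl.ι) ≫ cyl.ρ = 𝟙 F := by rw [Category.assoc]; exact cyl.fac₁
  have hw : s ≫ cyl.in₀ = s ≫ cyl.in₁ := cyl.isPushout.w
  haveI := hr.2 cyl.ι cyl.ι_cof hBBc hCylc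
  have sqH : CommSq c₂ cyl.ι r (cyl.ρ ≫ r) := by
    constructor
    apply cyl.isPushout.hom_ext
    · simp only [← Category.assoc]
      rw [desc0, fac0', Category.assoc, hsr, Category.comp_id, Category.id_comp]
    · simp only [← Category.assoc]
      rw [desc1, fac1']
  have hH1 : cyl.ι ≫ sqH.lift = c₂ := sqH.fac_left
  refine ⟨hs, fun {U V} g hg hU hV => ?_⟩
  constructor
  intro u v sq
  haveI := cyl.in₀_ι_acyclic.2 g hg hU hV
  have key : (cyl.in₀ ≫ cyl.ι) ≫ sqH.lift = r ≫ s := by rw [Category.assoc, hH1, desc0]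
  have wG : (r ≫ u) ≫ g = (cyl.in₀ ≫ cyl.ι) ≫ sqH.lift ≫ v := by
    rw [← Category.assoc, key, Category.assoc, Category.assoc, sq.w]
  have sqG : CommSq (r ≫ u) (cyl.in₀ ≫ cyl.ι) g (sqH.lift ≫ v) := ⟨wG⟩
  have hG1 : (cyl.in₀ ≫ cyl.ι) ≫ sqG.lift = r ≫ u := sqG.fac_left
  have hG2 : sqG.lift ≫ g = sqH.lift ≫ v := sqG.fac_right
  have fl : s ≫ cyl.in₁ ≫ cyl.ι ≫ sqG.lift = u := by
    calc s ≫ cyl.in₁ ≫ cyl.ι ≫ sqG.lift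
        = (s ≫ cyl.in₁) ≫ cyl.ι ≫ sqG.lift := by rw [Category.assoc]
      _ = (s ≫ cyl.in₀) ≫ cyl.ι ≫ sqG.lift := by rw [hw]
      _ = s ≫ (cyl.in₀ ≫ cyl.ι) ≫ sqG.lift := by simp only [Category.assoc]
      _ = s ≫ r ≫ u := by rw [hG1]
      _ = u := by rw [← Category.assoc, hsr, Category.id_comp]
  have fr : (cyl.in₁ ≫ cyl.ι ≫ sqG.lift) ≫ g = v := by
    calc (cyl.in₁ ≫ cyl.ι ≫ sqG.lift) ≫ g
        = cyl.in₁ ≫ cyl.ι ≫ sqG.lift ≫ g := by simp only [Category.assoc]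
      _ = cyl.in₁ ≫ cyl.ι ≫ sqH.lift ≫ v := by rw [hG2]
      _ = (cyl.in₁ ≫ (cyl.ι ≫ sqH.lift)) ≫ v := by simp only [Category.assoc]
      _ = (cyl.in₁ ≫ c₂) ≫ v := by rw [hH1]
      _ = v := by rw [desc1, Category.id_comp]
  exact CommSq.HasLift.mk' ⟨cyl.in₁ ≫ cyl.ι ≫ sqG.lift, fl, fr⟩

end Helpers

/-- equivalent characterizations of the path object axiom, in the presence
of the factorization axiom and the cylinder axiom. -/
theorem statement9 (Cof Fib : MorphismProperty C)
    (hCof : IsCofClass Cof) (hFib : IsFibClass Fib)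
    (hfac₁ : ∀ {X Y : C} (f : X ⟶ Y), Cofibrant Cof X → Fibrant Fib Y →
      ∃ (Z : C) (i : X ⟶ Z) (q : Z ⟶ Y), Cof i ∧ IsAcyclicFib Cof Fib q ∧ i ≫ q = f)
    (hfac₂ : ∀ {X Y : C} (f : X ⟶ Y), Cofibrant Cof X → Fibrant Fib Y →
      ∃ (Z : C) (i : X ⟶ Z) (q : Z ⟶ Y), IsAcyclicCof Cof Fib i ∧ Fib q ∧ i ≫ q = f)
    (hcyl : ∀ {A B : C} (i : A ⟶ B), Cof i → Cofibrant Cof A → Fibrant Fib B →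
      Nonempty (RelStrongCylinder Cof Fib i)) :
    List.TFAE [
      -- (i) C is a weak model category: any fibration from a cofibrant object to a
      -- fibrant object admits a relative strong path object
      (∀ {X Y : C} (q : Y ⟶ X), Fib q → Cofibrant Cof Y → Fibrant Fib X →
        Nonempty (RelStrongPath Cof Fib q)),
      -- (ii) right cancellation for acyclic cofibrations between bifibrant objects
      (∀ {A B D : C} (i : A ⟶ B) (j : B ⟶ D), Cof j →
        Cofibrant Cof A → Fibrant Fib A → Cofibrant Cof B → Fibrant Fib B →
        Cofibrant Cof D → Fibrant Fib D →
        IsAcyclicCof Cof Fib i → IsAcyclicCof Cof Fib (i ≫ j) → IsAcyclicCof Cof Fib j),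
      -- (iii) the same restricted to a class J of acyclic cofibrations through which
      -- every map from a cofibrant object to a fibrant object factors before a fibration
      (∃ J : MorphismProperty C,
        (∀ {X Y : C} (j : X ⟶ Y), J j → IsAcyclicCof Cof Fib j) ∧
        (∀ {X Y : C} (f : X ⟶ Y), Cofibrant Cof X → Fibrant Fib Y →
          ∃ (Z : C) (i : X ⟶ Z) (q : Z ⟶ Y), J i ∧ Fib q ∧ i ≫ q = f) ∧
        (∀ {A B D : C} (i : A ⟶ B) (j : B ⟶ D), Cof j →
          Cofibrant Cof A → Fibrant Fib A → Cofibrant Cof B → Fibrant Fib B →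
          Cofibrant Cof D → Fibrant Fib D →
          J i → IsAcyclicCof Cof Fib (i ≫ j) → IsAcyclicCof Cof Fib j))
    ] := by
  tfae_have 1 → 2 := by
    intro h1 A B D i j hj hAc hAf hBc hBf hDc hDf hi hij
    obtain ⟨Z, u₂, f₂, hu₂, hf₂, huf⟩ := hfac₂ j hBc hDf
    have hZf : Fibrant Fib Z := fibrant_source hFib f₂ hf₂ hDf
    have hZc : Cofibrant Cof Z := cofibrant_target hCof u₂ hu₂.1 hBc
    haveI := hij.2 f₂ hf₂ hZf hDf
    have sqd : CommSq (i ≫ u₂) (i ≫ j) f₂ (𝟙 D) :=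
      ⟨by rw [Category.assoc, huf, Category.comp_id]⟩
    have hd1 : (i ≫ j) ≫ sqd.lift = i ≫ u₂ := sqd.fac_left
    have hd2 : sqd.lift ≫ f₂ = 𝟙 D := sqd.fac_right
    obtain ⟨P⟩ := h1 f₂ hf₂ hZc hDf
    have hZZf : Fibrant Fib P.YY := fibrant_of_isPullback hFib P.isPullback hf₂ hDf hZf
    have hPf : Fibrant Fib P.Pth :=
      fibrant_source hFib (P.π ≫ P.pr₀) P.π_pr₀_acyclic.1 hZf
    have hm : (j ≫ sqd.lift) ≫ f₂ = u₂ ≫ f₂ := by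
      rw [Category.assoc, hd2, Category.comp_id, huf]
    have hm0 : P.isPullback.lift (j ≫ sqd.lift) u₂ hm ≫ P.pr₀ = j ≫ sqd.lift :=
      P.isPullback.lift_fst _ _ _
    have hm1 : P.isPullback.lift (j ≫ sqd.lift) u₂ hm ≫ P.pr₁ = u₂ :=
      P.isPullback.lift_snd _ _ _
    haveI := hi.2 P.π P.π_fib hPf hZZf
    have wK : (i ≫ u₂ ≫ P.σ) ≫ P.π = i ≫ P.isPullback.lift (j ≫ sqd.lift) u₂ hm := by
      apply P.isPullback.hom_ext
      · simp only [Category.assoc]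
        rw [P.fac₀, Category.comp_id, hm0]
        simp only [← Category.assoc]
        exact hd1.symm
      · simp only [Category.assoc]
        rw [P.fac₁, Category.comp_id, hm1]
    have sqK : CommSq (i ≫ u₂ ≫ P.σ) i P.π (P.isPullback.lift (j ≫ sqd.lift) u₂ hm) := ⟨wK⟩
    have hK2 : sqK.lift ≫ P.π = P.isPullback.lift (j ≫ sqd.lift) u₂ hm := sqK.fac_right
    haveI := P.π_pr₀_acyclic.2 j hj hBc hDc
    have wΛ : sqK.lift ≫ P.π ≫ P.pr₀ = j ≫ sqd.lift := by
      rw [← Category.assoc, hK2, hm0]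
    have sqΛ : CommSq sqK.lift j (P.π ≫ P.pr₀) sqd.lift := ⟨wΛ⟩
    have hΛ1 : j ≫ sqΛ.lift = sqK.lift := sqΛ.fac_left
    have hΛ2 : sqΛ.lift ≫ P.π ≫ P.pr₀ = sqd.lift := sqΛ.fac_right
    have he1 : j ≫ sqΛ.lift ≫ P.π ≫ P.pr₁ = u₂ := by
      rw [← Category.assoc, hΛ1, ← Category.assoc, hK2, hm1]
    have he2 : (sqΛ.lift ≫ P.π ≫ P.pr₁) ≫ f₂ = 𝟙 D := by
      calc (sqΛ.lift ≫ P.π ≫ P.pr₁) ≫ f₂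
          = sqΛ.lift ≫ P.π ≫ P.pr₁ ≫ f₂ := by simp only [Category.assoc]
        _ = sqΛ.lift ≫ P.π ≫ P.pr₀ ≫ f₂ := by rw [← P.isPullback.w]
        _ = (sqΛ.lift ≫ P.π ≫ P.pr₀) ≫ f₂ := by simp only [Category.assoc]
        _ = 𝟙 D := by rw [hΛ2, hd2]
    refine ⟨hj, fun {U V} g hg hU hV => ?_⟩
    constructor
    intro f h sq
    haveI := hu₂.2 g hg hU hV
    have wsq : f ≫ g = u₂ ≫ f₂ ≫ h := by
      rw [sq.w, ← Category.assoc, huf]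
    have sqw : CommSq f u₂ g (f₂ ≫ h) := ⟨wsq⟩
    refine CommSq.HasLift.mk' ⟨(sqΛ.lift ≫ P.π ≫ P.pr₁) ≫ sqw.lift, ?_, ?_⟩
    · calc j ≫ (sqΛ.lift ≫ P.π ≫ P.pr₁) ≫ sqw.lift
          = (j ≫ sqΛ.lift ≫ P.π ≫ P.pr₁) ≫ sqw.lift := by simp only [Category.assoc]
        _ = u₂ ≫ sqw.lift := by rw [he1]
        _ = f := sqw.fac_left
    · rw [Category.assoc, sqw.fac_right, ← Category.assoc, he2, Category.id_comp]
  tfae_have 2 → 3 := by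
    intro h2
    refine ⟨fun {X Y} f => IsAcyclicCof Cof Fib f, fun {X Y} j hj => hj,
      fun {X Y} f hX hY => hfac₂ f hX hY, ?_⟩
    intro A B D i j hj h1' h2' h3' h4' h5' h6' hi hij
    exact h2 i j hj h1' h2' h3' h4' h5' h6' hi hij
  tfae_have 3 → 1 := by
    rintro ⟨J, hJ1, hJ2, hJ3⟩ X Y q hq hYc hXf
    have hYf : Fibrant Fib Y := fibrant_source hFib q hq hXf
    obtain ⟨YY, pr₀, pr₁, hPB, hpr₀⟩ := hFib.pullback_mem q q hq hXf hYf
    have hYYf : Fibrant Fib YY := fibrant_source hFib pr₀ hpr₀ hYf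
    have hδw : 𝟙 Y ≫ q = 𝟙 Y ≫ q := rfl
    obtain ⟨Pth, σ, π, hσJ, hπ, hσπ⟩ := hJ2 (hPB.lift (𝟙 Y) (𝟙 Y) hδw) hYc hYYf
    have hσAC := hJ1 σ hσJ
    have hPthc : Cofibrant Cof Pth := cofibrant_target hCof σ hσAC.1 hYc
    have hPthf : Fibrant Fib Pth := fibrant_source hFib π hπ hYYf
    have hp : Fib (π ≫ pr₀) := hFib.comp_mem _ _ hπ hpr₀
    have hfac0 : σ ≫ π ≫ pr₀ = 𝟙 Y := by
      rw [← Category.assoc, hσπ, hPB.lift_fst]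
    have hfac1 : σ ≫ π ≫ pr₁ = 𝟙 Y := by
      rw [← Category.assoc, hσπ, hPB.lift_snd]
    obtain ⟨F, c, r, hc, hr, hcr⟩ := hfac₁ (π ≫ pr₀) hPthc hYf
    have hFc : Cofibrant Cof F := cofibrant_target hCof c hc hPthc
    have hFf : Fibrant Fib F := fibrant_source hFib r hr.1 hYf
    have hsr : (σ ≫ c) ≫ r = 𝟙 Y := by rw [Category.assoc, hcr, hfac0]
    have hsAC := section_acyclicCof hCof hFib hcyl (σ ≫ c) r
      (hCof.comp_mem _ _ hσAC.1 hc) hsr hr hYc hFc hFf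
    have hcAC := hJ3 σ c hc hYc hYf hPthc hPthf hFc hFf hσJ hsAC
    haveI := hcAC.2 (π ≫ pr₀) hp hPthf hYf
    have sqT : CommSq (𝟙 Pth) c (π ≫ pr₀) r := ⟨by rw [Category.id_comp, hcr]⟩
    have ht1 : c ≫ sqT.lift = 𝟙 Pth := sqT.fac_left
    have ht2 : sqT.lift ≫ π ≫ pr₀ = r := sqT.fac_right
    refine ⟨⟨YY, pr₀, pr₁, hPB, Pth, π, σ, hπ, ⟨hp, ?_⟩, hfac0, hfac1⟩⟩
    intro A B i₀ hi₀ hA hB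
    haveI := hr.2 i₀ hi₀ hA hB
    constructor
    intro a b sq
    have wsq : (a ≫ c) ≫ r = i₀ ≫ b := by rw [Category.assoc, hcr, sq.w]
    have sq' : CommSq (a ≫ c) i₀ r b := ⟨wsq⟩
    refine CommSq.HasLift.mk' ⟨sq'.lift ≫ sqT.lift, ?_, ?_⟩
    · rw [← Category.assoc, sq'.fac_left, Category.assoc, ht1, Category.comp_id]
    · rw [Category.assoc, ht2, sq'.fac_right]
  tfae_finish

end WMC
end
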